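/- arXiv:1611.07875 — 5 statements merged into one kernel-verified Lean document; each statement's English description precedes it below -/
import Mathlib

section
/- Let Γ ⊆ ℝ² be a compact arcwise connected set with H¹(Γ) < ∞ and diam(Γ) > 0. For every ρ > 0 with ρ < diam(Γ), there exists a finite set J of points of Γ such that Γ ⊆ ⋃_{x∈J} closed ball B̄(x,ρ) and card(J) ≤ min{ 5·H¹(Γ)/ρ , 25·diam(Γ)²/ρ² }. -/
open MeasureTheory Set Metric
open scoped ENNReal Topology

abbrev E2 := EuclideanSpace ℝ (Fin 2)

-- density lower bound for path connected sets
lemma density_lemma (Γ : Set E2) (hΓpc : IsPathConnected Γ) (x : E2) (hx : x ∈ Γ)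
    (r : ℝ) (hr : 0 ≤ r) (y : E2) (hy : y ∈ Γ) (hxy : r ≤ dist y x) :
    ENNReal.ofReal r ≤ μH[1] (Γ ∩ Metric.closedBall x r) := by
  obtain ⟨γ, hγ⟩ := hΓpc.joinedIn x hx y hy
  set f : E2 → ℝ := fun z => dist z x with hf
  have hlip : LipschitzWith 1 f := LipschitzWith.dist_left x
  have hsub : Set.Icc (0:ℝ) r ⊆ f '' (Γ ∩ Metric.closedBall x r) := by
    intro c hc
    have hcont : Continuous (fun t => f (γ t)) := hlip.continuous.comp γ.continuous
    have hiv := intermediate_value_univ (0 : unitInterval) 1 hcont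
    have hc' : c ∈ Set.Icc (f (γ 0)) (f (γ 1)) := by
      simp only [γ.source, γ.target, hf, dist_self]
      exact ⟨hc.1, hc.2.trans hxy⟩
    obtain ⟨t, ht⟩ := hiv hc'
    refine ⟨γ t, ⟨hγ t, ?_⟩, ht⟩
    simp only [Metric.mem_closedBall]
    calc dist (γ t) x = c := ht
      _ ≤ r := hc.2
  calc ENNReal.ofReal r = μH[1] (Set.Icc (0:ℝ) r) := by
        rw [MeasureTheory.hausdorffMeasure_real, Real.volume_Icc, sub_zero]
    _ ≤ μH[1] (f '' (Γ ∩ Metric.closedBall x r)) := measure_mono hsub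
    _ ≤ (1:ℝ≥0∞) ^ (1:ℝ) * μH[1] (Γ ∩ Metric.closedBall x r) := by
        simpa using hlip.hausdorffMeasure_image_le (d := 1) zero_le_one _
    _ = μH[1] (Γ ∩ Metric.closedBall x r) := by simp

theorem stmt_3 (Γ : Set E2) (hΓc : IsCompact Γ) (hΓpc : IsPathConnected Γ)
    (hΓfin : μH[1] Γ < ⊤) (hdiam : 0 < Metric.diam Γ)
    (ρ : ℝ) (hρ : 0 < ρ) (hρd : ρ < Metric.diam Γ) :
    ∃ J : Finset E2, ↑J ⊆ Γ ∧ (Γ ⊆ ⋃ x ∈ J, Metric.closedBall x ρ) ∧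
      (J.card : ℝ) ≤ min (5 * (μH[1] Γ).toReal / ρ) (25 * (Metric.diam Γ) ^ 2 / ρ ^ 2) := by
  classical
  obtain ⟨x₀, hx₀, -⟩ := id hΓpc
  set D := Metric.diam Γ with hD
  set P : Finset E2 → Prop := fun J => ↑J ⊆ Γ ∧ ((↑J : Set E2).Pairwise fun a b => ρ < dist a b)
    with hP
  have hρ2 : (0:ℝ) < ρ / 2 := by linarith
  set c := volume (Metric.ball (0:E2) 1) with hc
  have hc0 : c ≠ 0 := (measure_ball_pos _ _ one_pos).ne'
  have hcT : c ≠ ⊤ := measure_ball_lt_top.ne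
  have hball : ∀ (z : E2) (s : ℝ), 0 ≤ s →
      volume (Metric.ball z s) = ENNReal.ofReal (s ^ 2) * c := by
    intro z s hs
    rw [Measure.addHaar_ball volume z hs, finrank_euclideanSpace_fin]
  -- cardinality bound for separated families
  have key : ∀ J : Finset E2, P J → (J.card : ℝ) * (ρ/2)^2 ≤ (D + ρ/2)^2 := by
    rintro J ⟨hJΓ, hJsep⟩
    have hdisj : (↑J : Set E2).PairwiseDisjoint fun z => Metric.ball z (ρ/2) := by
      intro a ha b hb hab
      exact Metric.ball_disjoint_ball (by linarith [hJsep ha hb hab])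
    have hunion : (⋃ z ∈ J, Metric.ball z (ρ/2)) ⊆ Metric.ball x₀ (D + ρ/2) := by
      intro w hw
      simp only [Set.mem_iUnion, Metric.mem_ball] at hw ⊢
      obtain ⟨z, hz, hwz⟩ := hw
      calc dist w x₀ ≤ dist w z + dist z x₀ := dist_triangle _ _ _
        _ < ρ/2 + D := by
            have := Metric.dist_le_diam_of_mem hΓc.isBounded (hJΓ hz) hx₀
            linarith
        _ = D + ρ/2 := by ring
    have hsum : volume (⋃ z ∈ J, Metric.ball z (ρ/2))
        = ∑ z ∈ J, volume (Metric.ball z (ρ/2)) :=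
      measure_biUnion_finset hdisj fun _ _ => measurableSet_ball
    have hstep : (J.card : ℝ≥0∞) * (ENNReal.ofReal ((ρ/2)^2) * c)
        ≤ ENNReal.ofReal ((D + ρ/2)^2) * c := by
      calc (J.card : ℝ≥0∞) * (ENNReal.ofReal ((ρ/2)^2) * c)
          = ∑ z ∈ J, volume (Metric.ball z (ρ/2)) := by
            rw [Finset.sum_congr rfl fun z _ => hball z (ρ/2) hρ2.le]
            simp [Finset.sum_const, nsmul_eq_mul]
        _ = volume (⋃ z ∈ J, Metric.ball z (ρ/2)) := hsum.symm
        _ ≤ volume (Metric.ball x₀ (D + ρ/2)) := measure_mono hunion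
        _ = ENNReal.ofReal ((D + ρ/2)^2) * c := hball x₀ _ (by positivity)
    rw [← mul_assoc, ENNReal.mul_le_mul_iff_left hc0 hcT] at hstep
    have : ENNReal.ofReal ((J.card : ℝ) * (ρ/2)^2) ≤ ENNReal.ofReal ((D + ρ/2)^2) := by
      rwa [ENNReal.ofReal_mul (by positivity), ENNReal.ofReal_natCast]
    exact (ENNReal.ofReal_le_ofReal_iff (by positivity)).mp this
  -- the natural-number bound
  have keyn : ∀ J : Finset E2, P J → J.card ≤ ⌈(D + ρ/2)^2 / (ρ/2)^2⌉₊ := by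
    intro J hJ
    have h1 : (J.card : ℝ) ≤ (D + ρ/2)^2 / (ρ/2)^2 := by
      rw [le_div_iff₀ (by positivity)]; exact key J hJ
    exact_mod_cast h1.trans (Nat.le_ceil _)
  -- maximal separated family
  set S : Set ℕ := {n | ∃ J : Finset E2, P J ∧ J.card = n} with hS
  have hSne : S.Nonempty := ⟨0, ∅, ⟨by simp, by simp⟩, rfl⟩
  have hSbdd : BddAbove S := ⟨⌈(D + ρ/2)^2 / (ρ/2)^2⌉₊, fun n ⟨J, hJ, hn⟩ => hn ▸ keyn J hJ⟩
  obtain ⟨J, hJP, hJcard⟩ := Nat.sSup_mem hSne hSbdd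
  refine ⟨J, hJP.1, ?_, ?_⟩
  · -- covering by maximality
    intro z hz
    by_contra hzc
    simp only [Set.mem_iUnion, Metric.mem_closedBall, not_exists, not_le] at hzc
    have hzJ : z ∉ J := by
      intro h
      have := hzc z h
      simp only [dist_self] at this
      linarith
    have hP' : P (insert z J) := by
      constructor
      · intro w hw
        simp only [Finset.coe_insert, Set.mem_insert_iff] at hw
        rcases hw with rfl | hw
        · exact hz
        · exact hJP.1 hw
      · rw [Finset.coe_insert, Set.pairwise_insert]
        refine ⟨hJP.2, fun b hb hzb => ⟨hzc b hb, by rw [dist_comm]; exact hzc b hb⟩⟩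
    have hmem : (insert z J).card ∈ S := ⟨_, hP', rfl⟩
    have hle := le_csSup hSbdd hmem
    rw [Finset.card_insert_of_notMem hzJ, hJcard] at hle
    omega
  · -- cardinality bounds
    have hH : (J.card : ℝ) * (ρ/2) ≤ (μH[1] Γ).toReal := by
      have hdisj : (↑J : Set E2).PairwiseDisjoint fun z => Γ ∩ Metric.closedBall z (ρ/2) := by
        intro a ha b hb hab
        refine Disjoint.mono inter_subset_right inter_subset_right ?_
        exact Metric.closedBall_disjoint_closedBall (by linarith [hJP.2 ha hb hab])
      have hsum : ∑ z ∈ J, μH[1] (Γ ∩ Metric.closedBall z (ρ/2)) ≤ μH[1] Γ := by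
        rw [← measure_biUnion_finset hdisj
          (fun z _ => hΓc.measurableSet.inter measurableSet_closedBall)]
        exact measure_mono (Set.iUnion₂_subset fun z hz => Set.inter_subset_left)
      have hlow : ∀ z ∈ J, ENNReal.ofReal (ρ/2) ≤ μH[1] (Γ ∩ Metric.closedBall z (ρ/2)) := by
        intro z hzJ
        obtain ⟨y, hy, hyz⟩ : ∃ y ∈ Γ, ρ/2 ≤ dist y z := by
          by_contra h
          push_neg at h
          have hDle : D ≤ ρ := Metric.diam_le_of_forall_dist_le hρ.le fun a ha b hb => by
            have h1 := h a ha
            have h2 := h b hb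
            have h3 := dist_triangle a z b
            rw [dist_comm z b] at h3
            linarith
          linarith
        exact density_lemma Γ hΓpc z (hJP.1 hzJ) (ρ/2) hρ2.le y hy hyz
      have hcard : ENNReal.ofReal ((J.card : ℝ) * (ρ/2)) ≤ μH[1] Γ := by
        calc ENNReal.ofReal ((J.card : ℝ) * (ρ/2))
            = (J.card : ℝ≥0∞) * ENNReal.ofReal (ρ/2) := by
              rw [ENNReal.ofReal_mul (by positivity), ENNReal.ofReal_natCast]
          _ = ∑ _z ∈ J, ENNReal.ofReal (ρ/2) := by simp [Finset.sum_const, nsmul_eq_mul]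
          _ ≤ ∑ z ∈ J, μH[1] (Γ ∩ Metric.closedBall z (ρ/2)) := Finset.sum_le_sum hlow
          _ ≤ μH[1] Γ := hsum
      exact (ENNReal.ofReal_le_iff_le_toReal hΓfin.ne).mp hcard
    have hK := key J hJP
    have hH0 : 0 ≤ (μH[1] Γ).toReal := ENNReal.toReal_nonneg
    refine le_min ?_ ?_
    · rw [le_div_iff₀ hρ]
      nlinarith
    · rw [le_div_iff₀ (by positivity : (0:ℝ) < ρ^2)]
      nlinarith [sq_nonneg ρ, sq_nonneg D, sq_nonneg (D - ρ), Nat.cast_nonneg (α := ℝ) J.card]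
end

section
/- Let Γ ⊆ ℝ² be a compact arcwise connected set with H¹(Γ) < ∞. For every ρ > 0, the Lebesgue measure of the closed ρ-neighborhood {x ∈ ℝ² : dist(x,Γ) ≤ ρ} is at most max{ 20π·H¹(Γ)·ρ , 4π·ρ² }. -/
open MeasureTheory Set Metric
open scoped ENNReal Topology

lemma conn_ball_h1 {Γ : Set E2} (hc : IsConnected Γ) {x y : E2} (hx : x ∈ Γ)
    (hy : y ∈ Γ) {r : ℝ} (hr : 0 ≤ r) (hd : r ≤ dist x y) :
    ENNReal.ofReal r ≤ μH[1] (Γ ∩ Metric.closedBall x r) := by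
  set f : E2 → ℝ := dist x with hf
  have hlip : LipschitzWith 1 f := LipschitzWith.dist_right x
  have himg : Set.Icc 0 r ⊆ f '' (Γ ∩ Metric.closedBall x r) := by
    intro c hc'
    have hconn : IsPreconnected (f '' Γ) :=
      (hc.image f hlip.continuous.continuousOn).isPreconnected
    have h0 : (0 : ℝ) ∈ f '' Γ := ⟨x, hx, by simp [hf]⟩
    have hdy : dist x y ∈ f '' Γ := ⟨y, hy, rfl⟩
    have : c ∈ f '' Γ :=
      hconn.Icc_subset h0 hdy ⟨hc'.1, le_trans hc'.2 hd⟩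
    obtain ⟨z, hz, hzc⟩ := this
    refine ⟨z, ⟨hz, ?_⟩, hzc⟩
    rw [Metric.mem_closedBall, dist_comm, show dist x z = c from hzc]
    exact hc'.2
  calc ENNReal.ofReal r = μH[1] (Set.Icc (0:ℝ) r) := by
        rw [MeasureTheory.hausdorffMeasure_real, Real.volume_Icc, sub_zero]
    _ ≤ μH[1] (f '' (Γ ∩ Metric.closedBall x r)) := measure_mono himg
    _ ≤ μH[1] (Γ ∩ Metric.closedBall x r) := by
        simpa using hlip.hausdorffMeasure_image_le (d := 1) (by norm_num)
          (Γ ∩ Metric.closedBall x r)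


theorem stmt_4 (Γ : Set E2) (hΓc : IsCompact Γ) (hΓpc : IsPathConnected Γ)
    (hΓfin : μH[1] Γ < ⊤) (ρ : ℝ) (hρ : 0 < ρ) :
    volume {x : E2 | Metric.infDist x Γ ≤ ρ} ≤
      ENNReal.ofReal (max (20 * Real.pi * (μH[1] Γ).toReal * ρ) (4 * Real.pi * ρ ^ 2)) := by
  classical
  have hπ := Real.pi_pos
  have hΓconn : IsConnected Γ := hΓpc.isConnected
  obtain ⟨x₀, hx₀, -⟩ := hΓpc
  set L := (μH[1] Γ).toReal with hLdef
  have hLnn : 0 ≤ L := ENNReal.toReal_nonneg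
  have hvol : ∀ (c : E2) (r : ℝ), 0 ≤ r →
      volume (Metric.closedBall c r) = ENNReal.ofReal (r ^ 2 * Real.pi) := by
    intro c r hr
    rw [EuclideanSpace.volume_closedBall]
    rw [← ENNReal.ofReal_pow hr, ← ENNReal.ofReal_mul (by positivity)]
    congr 1
    rw [Fintype.card_fin, Real.sq_sqrt hπ.le]
    norm_num [Real.Gamma_two]
  -- given x in the neighborhood, find a point of Γ within ρ
  have hnear : ∀ x : E2, Metric.infDist x Γ ≤ ρ → ∃ y ∈ Γ, dist x y ≤ ρ := by
    intro x hx
    obtain ⟨y, hyΓ, hyd⟩ := hΓc.exists_infDist_eq_dist ⟨x₀, hx₀⟩ x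
    exact ⟨y, hyΓ, hyd ▸ hx⟩
  by_cases hbig : ∃ a ∈ Γ, ∃ b ∈ Γ, ρ < dist a b
  · -- main case: Γ has diameter > ρ
    obtain ⟨a, haΓ, b, hbΓ, hab⟩ := hbig
    have hfar : ∀ x ∈ Γ, ∃ y ∈ Γ, ρ / 2 ≤ dist x y := by
      intro x hx
      rcases le_total (dist x a) (dist x b) with h | h
      · refine ⟨b, hbΓ, ?_⟩
        have := dist_triangle a x b
        rw [dist_comm a x] at this
        linarith
      · refine ⟨a, haΓ, ?_⟩
        have := dist_triangle a x b
        rw [dist_comm a x] at this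
        linarith
    -- finite ρ-net T ⊆ Γ
    obtain ⟨T, hTΓ, hTfin, hTcov⟩ := EMetric.totallyBounded_iff'.1 hΓc.totallyBounded
      (ENNReal.ofReal ρ) (by simpa using hρ)
    set Tf : Finset E2 := hTfin.toFinset with hTf
    -- maximal ρ-separated subset s of Tf
    set P : Finset E2 → Prop := fun s => (↑s : Set E2).Pairwise fun u v => ρ < dist u v with hP
    have hSne : (Tf.powerset.filter P).Nonempty :=
      ⟨∅, by simp [hP, Set.Pairwise]⟩
    obtain ⟨s, hsS, hsmax⟩ : ∃ m ∈ Tf.powerset.filter P, ∀ x ∈ Tf.powerset.filter P, ¬ m < x := by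
      obtain ⟨m, hm⟩ := Finset.exists_maximal hSne
      exact ⟨m, hm.1, fun x hx hlt => absurd (hm.2 hx hlt.le) (not_le_of_gt hlt)⟩
    rw [Finset.mem_filter, Finset.mem_powerset] at hsS
    obtain ⟨hsTf, hsep⟩ := hsS
    have hsΓ : ∀ x ∈ s, x ∈ Γ := fun x hx => hTΓ (by simpa [hTf] using hsTf hx)
    -- every point of Tf is within ρ of some point of s
    have hclose : ∀ y ∈ Tf, ∃ x ∈ s, dist x y ≤ ρ := by
      intro y hy
      by_cases hys : y ∈ s
      · exact ⟨y, hys, by simp [hρ.le]⟩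
      by_contra hcon
      push_neg at hcon
      have hsymm : Symmetric fun u v : E2 => ρ < dist u v := by
        intro u v h
        exact lt_of_lt_of_eq h (dist_comm u v)
      have hins : insert y s ∈ Tf.powerset.filter P := by
        rw [Finset.mem_filter, Finset.mem_powerset]
        refine ⟨Finset.insert_subset hy hsTf, ?_⟩
        show ((insert y s : Finset E2) : Set E2).Pairwise fun u v => ρ < dist u v
        rw [Finset.coe_insert]
        haveI : Std.Symm (fun u v : E2 => ρ < dist u v) := ⟨fun a b h => hsymm h⟩
        refine Set.pairwise_insert_of_symm.2 ⟨hsep, fun v hv _ => ?_⟩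
        have := hcon v hv
        rwa [dist_comm]
      exact hsmax _ hins (Finset.ssubset_insert hys)
    -- counting: s.card * (ρ/2) ≤ L
    have hcard : (s.card : ℝ) * (ρ / 2) ≤ L := by
      have hdisj : (↑s : Set E2).PairwiseDisjoint
          fun x => Γ ∩ Metric.closedBall x (ρ / 2) := by
        intro u hu v hv huv
        have hd : ρ / 2 + ρ / 2 < dist u v := by
          have := hsep hu hv huv; linarith
        exact ((Metric.closedBall_disjoint_closedBall hd).inter_right' Γ).inter_left' Γ
      have hmeas : ∀ x ∈ s, MeasurableSet (Γ ∩ Metric.closedBall x (ρ / 2)) :=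
        fun x _ => (hΓc.isClosed.inter Metric.isClosed_closedBall).measurableSet
      have hle : (s.card : ℝ≥0∞) * ENNReal.ofReal (ρ / 2) ≤ μH[1] Γ := by
        calc (s.card : ℝ≥0∞) * ENNReal.ofReal (ρ / 2)
            = ∑ x ∈ s, ENNReal.ofReal (ρ / 2) := by
              simp [Finset.sum_const, nsmul_eq_mul]
          _ ≤ ∑ x ∈ s, μH[1] (Γ ∩ Metric.closedBall x (ρ / 2)) := by
              refine Finset.sum_le_sum fun x hx => ?_
              obtain ⟨y, hyΓ, hyd⟩ := hfar x (hsΓ x hx)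
              exact conn_ball_h1 hΓconn (hsΓ x hx) hyΓ (by positivity) hyd
          _ = μH[1] (⋃ x ∈ s, Γ ∩ Metric.closedBall x (ρ / 2)) :=
              (measure_biUnion_finset hdisj hmeas).symm
          _ ≤ μH[1] Γ := by
              refine measure_mono ?_
              intro z hz
              simp only [Set.mem_iUnion] at hz
              obtain ⟨x, _, hzx, _⟩ := hz
              exact hzx
      have := ENNReal.toReal_mono hΓfin.ne hle
      rwa [ENNReal.toReal_mul, ENNReal.toReal_natCast,
        ENNReal.toReal_ofReal (by positivity)] at this
    -- covering the neighborhood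
    have hcover : {x : E2 | Metric.infDist x Γ ≤ ρ} ⊆
        ⋃ x ∈ s, Metric.closedBall x (3 * ρ) := by
      intro x hx
      obtain ⟨y, hyΓ, hyd⟩ := hnear x hx
      obtain ⟨t, htT, hyt⟩ : ∃ t ∈ T, y ∈ EMetric.ball t (ENNReal.ofReal ρ) := by
        obtain ⟨t, ht, h⟩ := Set.mem_iUnion₂.1 (hTcov hyΓ)
        exact ⟨t, ht, h⟩
      have hytd : dist y t < ρ := by
        change y ∈ Metric.eball t (ENNReal.ofReal ρ) at hyt
        rw [EMetric.mem_ball, edist_dist] at hyt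
        exact (ENNReal.ofReal_lt_ofReal_iff_of_nonneg dist_nonneg).1 hyt
      obtain ⟨u, hus, hut⟩ := hclose t (by simpa [hTf] using htT)
      simp only [Set.mem_iUnion]
      refine ⟨u, hus, ?_⟩
      rw [Metric.mem_closedBall]
      calc dist x u ≤ dist x y + dist y u := dist_triangle x y u
        _ ≤ dist x y + (dist y t + dist t u) := by linarith [dist_triangle y t u]
        _ ≤ ρ + (ρ + ρ) := by
            have := hut
            rw [dist_comm t u] at *
            rw [dist_comm u t] at this
            linarith
        _ = 3 * ρ := by ring
    calc volume {x : E2 | Metric.infDist x Γ ≤ ρ}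
        ≤ volume (⋃ x ∈ s, Metric.closedBall x (3 * ρ)) := measure_mono hcover
      _ ≤ ∑ x ∈ s, volume (Metric.closedBall x (3 * ρ)) := measure_biUnion_finset_le _ _
      _ = (s.card : ℝ≥0∞) * ENNReal.ofReal ((3 * ρ) ^ 2 * Real.pi) := by
          simp [hvol _ _ (by positivity : (0:ℝ) ≤ 3 * ρ), Finset.sum_const, nsmul_eq_mul]
      _ ≤ ENNReal.ofReal (20 * Real.pi * L * ρ) := by
          rw [← ENNReal.ofReal_natCast, ← ENNReal.ofReal_mul (by positivity)]
          refine ENNReal.ofReal_le_ofReal ?_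
          have h18 := mul_le_mul_of_nonneg_right hcard
            (show (0:ℝ) ≤ 18 * Real.pi * ρ by positivity)
          nlinarith [mul_nonneg (mul_nonneg hπ.le hLnn) hρ.le]
      _ ≤ ENNReal.ofReal
            (max (20 * Real.pi * L * ρ) (4 * Real.pi * ρ ^ 2)) :=
          ENNReal.ofReal_le_ofReal (le_max_left _ _)
  · -- small case: Γ ⊆ closedBall x₀ ρ
    push_neg at hbig
    have hsub : {x : E2 | Metric.infDist x Γ ≤ ρ} ⊆ Metric.closedBall x₀ (2 * ρ) := by
      intro x hx
      obtain ⟨y, hyΓ, hyd⟩ := hnear x hx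
      rw [Metric.mem_closedBall]
      calc dist x x₀ ≤ dist x y + dist y x₀ := dist_triangle _ _ _
        _ ≤ ρ + ρ := add_le_add hyd (hbig y hyΓ x₀ hx₀)
        _ = 2 * ρ := by ring
    calc volume {x : E2 | Metric.infDist x Γ ≤ ρ}
        ≤ volume (Metric.closedBall x₀ (2 * ρ)) := measure_mono hsub
      _ = ENNReal.ofReal ((2 * ρ) ^ 2 * Real.pi) := hvol _ _ (by positivity)
      _ ≤ ENNReal.ofReal
            (max (20 * Real.pi * L * ρ) (4 * Real.pi * ρ ^ 2)) := by
          refine ENNReal.ofReal_le_ofReal (le_trans (le_of_eq ?_) (le_max_right _ _))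
          ring
end

section
/- Let Ω ⊆ ℝ² be bounded open, Γ ⊆ Ω closed, ε > 0, and let v ∈ C²(Ω∖Γ) ∩ C⁰(closure(Ω)) satisfy 0 ≤ v ≤ 1 in Ω, −4ε²Δv + v = 0 in Ω∖Γ, and v = 0 on ∂Ω. Then for every x₀ ∈ Ω∖Γ with dist(x₀, Γ) ≥ 12ε, one has v(x₀) ≤ exp( −3·dist(x₀,Γ)/(32ε) ). -/
open MeasureTheory Set Metric
open scoped ENNReal Topology

open Filter

noncomputable section

/-- The Laplacian of a real-valued function on the plane. -/
def lap (f : E2 → ℝ) (x : E2) : ℝ :=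
  ∑ i : Fin 2, fderiv ℝ (fderiv ℝ f) x (EuclideanSpace.single i 1) (EuclideanSpace.single i 1)

lemma myLineDeriv {U : Set E2} (hU : IsOpen U) {f : E2 → ℝ} (hf : ContDiffOn ℝ 2 f U)
    {z : E2} (e : E2) {t : ℝ} (ht : z + t • e ∈ U) :
    HasDerivAt (fun s : ℝ => f (z + s • e)) (fderiv ℝ f (z + t • e) e) t := by
  have hL : HasDerivAt (fun s : ℝ => z + s • e) e t := by
    simpa using ((hasDerivAt_id t).smul_const e).const_add z
  have hd : DifferentiableAt ℝ f (z + t • e) :=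
    (hf.differentiableOn two_ne_zero).differentiableAt (hU.mem_nhds ht)
  exact hd.hasFDerivAt.comp_hasDerivAt t hL

lemma myLineDeriv2 {U : Set E2} (hU : IsOpen U) {f : E2 → ℝ} (hf : ContDiffOn ℝ 2 f U)
    {z : E2} (e : E2) {t : ℝ} (ht : z + t • e ∈ U) :
    HasDerivAt (fun s : ℝ => fderiv ℝ f (z + s • e) e)
      (fderiv ℝ (fderiv ℝ f) (z + t • e) e e) t := by
  have hL : HasDerivAt (fun s : ℝ => z + s • e) e t := by
    simpa using ((hasDerivAt_id t).smul_const e).const_add z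
  have hcd : ContDiffAt ℝ 2 f (z + t • e) := hf.contDiffAt (hU.mem_nhds ht)
  have hdF : DifferentiableAt ℝ (fderiv ℝ f) (z + t • e) :=
    (hcd.fderiv_right (m := 1) (by norm_num)).differentiableAt one_ne_zero
  have h1 := hdF.hasFDerivAt.comp_hasDerivAt t hL
  have h2 := ((ContinuousLinearMap.apply ℝ ℝ e).hasFDerivAt).comp_hasDerivAt t h1
  exact h2

lemma sum_line (x₀ z : E2) (i : Fin 2) (t : ℝ) :
    (∑ j : Fin 2, ((z + t • EuclideanSpace.single i (1:ℝ)) j - x₀ j)^2)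
      = (∑ j : Fin 2, (z j - x₀ j)^2) + 2*(z i - x₀ i)*t + t^2 := by
  have happ : ∀ j, (z + t • EuclideanSpace.single i (1:ℝ)) j
      = z j + t * (if j = i then 1 else 0) := by
    intro j
    simp [EuclideanSpace.single_apply]
  rw [Fin.sum_univ_two, Fin.sum_univ_two, happ 0, happ 1]
  fin_cases i <;> simp <;> ring

lemma omega_contDiff (x₀ : E2) (c R : ℝ) :
    ContDiff ℝ 2 (fun x : E2 => Real.exp (c * ((∑ i : Fin 2, (x i - x₀ i)^2) - R^2))) := by
  apply Real.contDiff_exp.comp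
  apply contDiff_const.mul
  apply ContDiff.sub _ contDiff_const
  apply ContDiff.sum
  intro i _
  exact ((EuclideanSpace.proj i : E2 →L[ℝ] ℝ).contDiff.sub contDiff_const).pow 2

lemma omega_second (x₀ : E2) (c R : ℝ) (z : E2) (i : Fin 2) :
    fderiv ℝ (fderiv ℝ (fun x : E2 => Real.exp (c * ((∑ j : Fin 2, (x j - x₀ j)^2) - R^2)))) z
      (EuclideanSpace.single i 1) (EuclideanSpace.single i 1)
    = Real.exp (c * ((∑ j : Fin 2, (z j - x₀ j)^2) - R^2))
        * (4*c^2*(z i - x₀ i)^2 + 2*c) := by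
  set ω : E2 → ℝ := fun x => Real.exp (c * ((∑ j : Fin 2, (x j - x₀ j)^2) - R^2)) with hωdef
  set e : E2 := EuclideanSpace.single i 1 with hedef
  set Sz : ℝ := ∑ j : Fin 2, (z j - x₀ j)^2 with hSzdef
  set b : ℝ := z i - x₀ i with hbdef
  have h0 : z + (0:ℝ) • e = z := by simp
  have hωcd : ContDiffOn ℝ 2 ω univ := (omega_contDiff x₀ c R).contDiffOn
  -- explicit first derivative along the line
  have hP : ∀ t : ℝ, HasDerivAt (fun s : ℝ => c * ((Sz + 2*b*s + s^2) - R^2))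
      (c * (2*b + 2*t)) t := by
    intro t
    have h1 : HasDerivAt (fun s : ℝ => (Sz + 2*b*s + s^2) - R^2) (2*b + 2*t) t := by
      have := (((hasDerivAt_id t).const_mul (2*b)).const_add Sz).add
        (hasDerivAt_pow 2 t) |>.sub_const (R^2)
      convert this using 1
      · rfl
      · rfl
      · rfl
      · simp
    simpa [mul_comm] using h1.const_mul c
  have hGfun : (fun s : ℝ => ω (z + s • e))
      = fun s : ℝ => Real.exp (c * ((Sz + 2*b*s + s^2) - R^2)) := by
    funext s
    rw [hωdef]
    simp only []
    rw [sum_line x₀ z i s]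
  have hG : ∀ t : ℝ, HasDerivAt (fun s : ℝ => ω (z + s • e))
      (Real.exp (c * ((Sz + 2*b*t + t^2) - R^2)) * (c * (2*b + 2*t))) t := by
    intro t
    rw [hGfun]
    exact (hP t).exp
  have hA1 : ∀ t : ℝ, HasDerivAt (fun s : ℝ => ω (z + s • e))
      (fderiv ℝ ω (z + t • e) e) t := fun t =>
    myLineDeriv isOpen_univ hωcd e (mem_univ _)
  have hid : (fun t : ℝ => fderiv ℝ ω (z + t • e) e)
      = fun t : ℝ => Real.exp (c * ((Sz + 2*b*t + t^2) - R^2)) * (c * (2*b + 2*t)) := by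
    funext t
    exact (hA1 t).deriv ▸ ((hA1 t).unique (hG t))
  have hA2 : HasDerivAt (fun t : ℝ => fderiv ℝ ω (z + t • e) e)
      (fderiv ℝ (fderiv ℝ ω) z e e) 0 := by
    have := myLineDeriv2 isOpen_univ hωcd (z := z) e (t := 0) (Set.mem_univ _)
    rwa [h0] at this
  -- explicit second derivative
  have hG2 : HasDerivAt
      (fun t : ℝ => Real.exp (c * ((Sz + 2*b*t + t^2) - R^2)) * (c * (2*b + 2*t)))
      (ω z * (4*c^2*b^2 + 2*c)) 0 := by
    have hf1 : HasDerivAt (fun t : ℝ => Real.exp (c * ((Sz + 2*b*t + t^2) - R^2)))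
        (Real.exp (c * ((Sz + 2*b*0 + 0^2) - R^2)) * (c * (2*b + 2*0))) 0 := (hP 0).exp
    have hf2 : HasDerivAt (fun t : ℝ => c * (2*b + 2*t)) (2*c) 0 := by
      have := ((hasDerivAt_id (0:ℝ)).const_mul 2).const_add (2*b) |>.const_mul c
      simpa [mul_comm] using this
    have := hf1.mul hf2
    convert this using 1
    · rfl
    · rfl
    · rfl
    have hz0 : ω z = Real.exp (c * (Sz - R^2)) := by rw [hωdef, hSzdef]
    have harg : c * ((Sz + 2*b*0 + 0^2) - R^2) = c * (Sz - R^2) := by ring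
    rw [hz0, harg]; ring
  have := hA2
  rw [hid] at this
  have hfinal := this.unique hG2
  have hz0 : ω z = Real.exp (c * (Sz - R^2)) := by rw [hωdef, hSzdef]
  rw [hfinal, hz0]

lemma secondDerivTest {g d : ℝ → ℝ} {D : ℝ}
    (hg : ∀ᶠ t in 𝓝 (0:ℝ), HasDerivAt g (d t) t)
    (hd : HasDerivAt d D 0) (hmax : IsLocalMax g 0) : D ≤ 0 := by
  by_contra hD
  push_neg at hD
  have hd0 : d 0 = 0 := hmax.hasDerivAt_eq_zero hg.self_of_nhds
  have hslope : Tendsto (fun t => d t / t) (𝓝[≠] (0:ℝ)) (𝓝 D) := by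
    have h := hasDerivAt_iff_tendsto_slope.mp hd
    have he : (fun t => d t / t) = slope d 0 := by
      funext t; simp [slope_def_field, hd0]
    rw [he]; exact h
  have hpos : ∀ᶠ t in 𝓝[>] (0:ℝ), 0 < d t := by
    have h1 : ∀ᶠ t in 𝓝[≠] (0:ℝ), 0 < d t / t :=
      hslope.eventually (eventually_gt_nhds hD)
    have h2 : ∀ᶠ t in 𝓝[>] (0:ℝ), 0 < d t / t :=
      h1.filter_mono (nhdsWithin_mono _ (fun x hx => ne_of_gt hx))
    filter_upwards [h2, self_mem_nhdsWithin] with t h ht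
    have ht' : (0:ℝ) < t := ht
    rcases div_pos_iff.mp h with ⟨h3, _⟩ | ⟨_, h4⟩
    · exact h3
    · linarith
  obtain ⟨r, hr, hball⟩ := Metric.eventually_nhds_iff.mp (hg.and hmax)
  obtain ⟨u, hu, hIoc⟩ := mem_nhdsGT_iff_exists_Ioc_subset.mp hpos
  set δ := min (r / 2) u with hδdef
  have hδ : 0 < δ := lt_min (by linarith) hu
  have hδr : ∀ t ∈ Set.Icc (0:ℝ) δ, dist t (0:ℝ) < r := by
    intro t ht
    rw [Real.dist_eq, sub_zero, abs_of_nonneg ht.1]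
    calc t ≤ δ := ht.2
    _ ≤ r/2 := min_le_left _ _
    _ < r := by linarith
  have hcont : ContinuousOn g (Set.Icc 0 δ) := fun t ht =>
    ((hball (hδr t ht)).1.differentiableAt.continuousAt).continuousWithinAt
  have hderiv : ∀ t ∈ Set.Ioo (0:ℝ) δ, HasDerivAt g (d t) t := fun t ht =>
    (hball (hδr t ⟨le_of_lt ht.1, le_of_lt ht.2⟩)).1
  obtain ⟨cc, hc, hceq⟩ := exists_hasDerivAt_eq_slope g d hδ hcont hderiv
  have hgδ : g δ ≤ g 0 := (hball (hδr δ ⟨le_of_lt hδ, le_refl δ⟩)).2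
  have hdc : 0 < d cc := hIoc ⟨hc.1, le_trans (le_of_lt hc.2) (min_le_right _ _)⟩
  rw [hceq] at hdc
  have : (g δ - g 0) / (δ - 0) ≤ 0 := by
    apply div_nonpos_of_nonpos_of_nonneg <;> linarith
  linarith

lemma lap_le_at_max {U : Set E2} (hU : IsOpen U) {v w : E2 → ℝ}
    (hv : ContDiffOn ℝ 2 v U) (hw : ContDiff ℝ 2 w) {z : E2} (hz : z ∈ U)
    (hmax : IsLocalMax (fun x => v x - w x) z) : lap v z ≤ lap w z := by
  apply Finset.sum_le_sum
  intro i _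
  set e : E2 := EuclideanSpace.single i 1 with hedef
  have h0 : z + (0:ℝ) • e = z := by simp
  have hLc : Continuous (fun t : ℝ => z + t • e) :=
    continuous_const.add (continuous_id.smul continuous_const)
  have hT : Tendsto (fun t : ℝ => z + t • e) (𝓝 0) (𝓝 z) := by
    have := hLc.continuousAt (x := (0:ℝ))
    rwa [ContinuousAt, h0] at this
  have hev : ∀ᶠ t in 𝓝 (0:ℝ), z + t • e ∈ U := hT.eventually_mem (hU.mem_nhds hz)
  have hg : ∀ᶠ t in 𝓝 (0:ℝ), HasDerivAt (fun s : ℝ => v (z + s • e) - w (z + s • e))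
      (fderiv ℝ v (z + t • e) e - fderiv ℝ w (z + t • e) e) t := by
    filter_upwards [hev] with t ht
    exact (myLineDeriv hU hv e ht).sub (myLineDeriv isOpen_univ hw.contDiffOn e (Set.mem_univ _))
  have hd : HasDerivAt (fun t : ℝ => fderiv ℝ v (z + t • e) e - fderiv ℝ w (z + t • e) e)
      (fderiv ℝ (fderiv ℝ v) z e e - fderiv ℝ (fderiv ℝ w) z e e) 0 := by
    have h1 := myLineDeriv2 hU hv (z := z) e (t := 0) (by rwa [h0])
    have h2 := myLineDeriv2 isOpen_univ hw.contDiffOn (z := z) e (t := 0) (Set.mem_univ _)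
    rw [h0] at h1 h2
    exact h1.sub h2
  have hlm : IsLocalMax (fun t : ℝ => v (z + t • e) - w (z + t • e)) 0 := by
    have h := hT.eventually hmax
    filter_upwards [h] with t ht
    simpa [h0] using ht
  have := secondDerivTest hg hd hlm
  linarith


lemma sum_sq_eq_dist (x₀ z : E2) : (∑ j : Fin 2, (z j - x₀ j)^2) = dist z x₀ ^ 2 := by
  rw [EuclideanSpace.dist_eq, Real.sq_sqrt (by positivity)]
  exact Finset.sum_congr rfl (fun j _ => by rw [Real.dist_eq, sq_abs])

theorem stmt_10 (Ω : Set E2) (hΩo : IsOpen Ω) (hΩb : Bornology.IsBounded Ω)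
    (Γ : Set E2) (hΓcl : IsClosed Γ) (hΓΩ : Γ ⊆ Ω) (ε : ℝ) (hε : 0 < ε)
    (v : E2 → ℝ) (hvC2 : ContDiffOn ℝ 2 v (Ω \ Γ)) (hvC0 : ContinuousOn v (closure Ω))
    (hbd : ∀ x ∈ Ω, 0 ≤ v x ∧ v x ≤ 1)
    (heq : ∀ x ∈ Ω \ Γ, -4 * ε ^ 2 * lap v x + v x = 0)
    (hbdry : ∀ x ∈ frontier Ω, v x = 0)
    (x₀ : E2) (hx₀ : x₀ ∈ Ω \ Γ) (hdist : 12 * ε ≤ Metric.infDist x₀ Γ) :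
    v x₀ ≤ Real.exp (-3 * Metric.infDist x₀ Γ / (32 * ε)) := by
  set d := Metric.infDist x₀ Γ with hddef
  have hd : 0 < d := lt_of_lt_of_le (by linarith) hdist
  set R : ℝ := 3/4 * d with hRdef
  have hR : 0 < R := by positivity
  have hR9 : 9 * ε ≤ R := by rw [hRdef]; linarith
  set c : ℝ := 1 / (8 * ε * R) with hcdef
  have hc : 0 < c := by positivity
  set ω : E2 → ℝ := fun x => Real.exp (c * ((∑ j : Fin 2, (x j - x₀ j)^2) - R^2)) with hωdef
  have hωpos : ∀ x, 0 < ω x := fun x => Real.exp_pos _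
  have hωapp : ∀ x : E2, ω x = Real.exp (c * ((∑ j : Fin 2, (x j - x₀ j)^2) - R^2)) :=
    fun x => rfl
  have hωcd : ContDiff ℝ 2 ω := omega_contDiff x₀ c R
  -- the ball avoids Γ
  have hballΓ : ∀ y ∈ ball x₀ R, y ∉ Γ := by
    intro y hy hyΓ
    have h1 : d ≤ dist x₀ y := Metric.infDist_le_dist_of_mem hyΓ
    have h2 : dist x₀ y < R := by rw [dist_comm]; exact mem_ball.mp hy
    rw [hRdef] at h2; linarith
  set V : Set E2 := ball x₀ R ∩ Ω with hVdef
  have hVopen : IsOpen V := isOpen_ball.inter hΩo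
  have hx₀V : x₀ ∈ V := ⟨mem_ball_self hR, hx₀.1⟩
  set K : Set E2 := closure V with hKdef
  have hVcb : V ⊆ closedBall x₀ R := inter_subset_left.trans ball_subset_closedBall
  have hKcb : K ⊆ closedBall x₀ R := closure_minimal hVcb Metric.isClosed_closedBall
  have hKcomp : IsCompact K :=
    (isCompact_closedBall x₀ R).of_isClosed_subset isClosed_closure hKcb
  have hKΩ : K ⊆ closure Ω := closure_mono inter_subset_right
  set w : E2 → ℝ := fun x => v x - ω x with hwdef
  have hwc : ContinuousOn w K := (hvC0.mono hKΩ).sub hωcd.continuous.continuousOn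
  obtain ⟨z, hzK, hzmax⟩ := hKcomp.exists_isMaxOn ⟨x₀, subset_closure hx₀V⟩ hwc
  have hzcb : z ∈ closedBall x₀ R := hKcb hzK
  have hzclΩ : z ∈ closure Ω := hKΩ hzK
  -- main claim : w z ≤ 0
  have hwz : w z ≤ 0 := by
    by_contra hpos
    push_neg at hpos
    -- z must be in Ω
    by_cases hzΩ : z ∈ Ω
    · -- z must be in the open ball
      by_cases hzb : z ∈ ball x₀ R
      · -- interior point : use the equation and comparison
        have hzΓ : z ∉ Γ := hballΓ z hzb
        have hzUV : z ∈ Ω \ Γ := ⟨hzΩ, hzΓ⟩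
        have hVK : V ⊆ K := subset_closure
        have hlocmax : IsLocalMax w z :=
          Filter.eventually_of_mem (hVopen.mem_nhds ⟨hzb, hzΩ⟩) (fun y hy => hzmax (hVK hy))
        have hlap : lap v z ≤ lap ω z :=
          lap_le_at_max (hΩo.sdiff hΓcl) hvC2 hωcd hzUV hlocmax
        have hlapω : lap ω z
            = ω z * (4*c^2*(∑ j : Fin 2, (z j - x₀ j)^2) + 4*c) := by
          rw [show lap ω z = ∑ i : Fin 2, fderiv ℝ (fderiv ℝ ω) z
            (EuclideanSpace.single i 1) (EuclideanSpace.single i 1) from rfl]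
          rw [Fin.sum_univ_two, omega_second x₀ c R z 0, omega_second x₀ c R z 1,
            hωapp z]
          simp only [Fin.sum_univ_two]
          ring
        set Sz : ℝ := ∑ j : Fin 2, (z j - x₀ j)^2 with hSzdef
        have hSz : Sz ≤ R^2 := by
          rw [hSzdef, sum_sq_eq_dist]
          have := mem_closedBall.mp hzcb
          nlinarith [dist_nonneg (x := z) (y := x₀)]
        have heqz := heq z hzUV
        have hvz : v z ≤ 4*ε^2 * lap ω z := by nlinarith [hlap]
        have hc8 : 8 * ε * R * c = 1 := by rw [hcdef]; field_simp
        have hbound : 4*ε^2 * lap ω z < ω z := by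
          rw [hlapω]
          have h1 : 16*ε^2*c^2 = 1/(4*R^2) := by
            rw [hcdef]; field_simp; ring
          have h2 : 16*ε^2*c^2*Sz ≤ 1/4 := by
            rw [h1]
            rw [div_mul_eq_mul_div, div_le_iff₀ (by positivity)]
            nlinarith [hSz]
          have h3 : 16*ε^2*c ≤ 2/9 := by
            have : 16*ε^2*c = 2*ε/R := by
              rw [hcdef]; field_simp; ring
            rw [this, div_le_iff₀ hR]
            nlinarith
          have hω := hωpos z
          nlinarith [hω, h2, h3]
        have : w z < 0 := by
          have : v z < ω z := lt_of_le_of_lt hvz hbound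
          simp only [hwdef]; linarith
        linarith
      · -- boundary of the ball : ω = 1 ≥ v
        have hzR : dist z x₀ = R := by
          have h1 := mem_closedBall.mp hzcb
          have h2 : ¬ dist z x₀ < R := fun h => hzb (mem_ball.mpr h)
          linarith
        have hω1 : ω z = 1 := by
          rw [hωapp z, sum_sq_eq_dist, hzR]
          simp
        have := (hbd z hzΩ).2
        have : w z ≤ 0 := by simp only [hwdef]; rw [hω1]; linarith
        linarith
    · -- z on the boundary of Ω : v z = 0
      have hzfr : z ∈ frontier Ω := by
        rw [frontier, hΩo.interior_eq]
        exact ⟨hzclΩ, hzΩ⟩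
      have hv0 : v z = 0 := hbdry z hzfr
      have : w z < 0 := by
        simp only [hwdef]; rw [hv0]
        simpa using hωpos z
      linarith
  -- conclude at x₀
  have hwx₀ : w x₀ ≤ w z := hzmax (subset_closure hx₀V)
  have hvx₀ : v x₀ ≤ ω x₀ := by simp only [hwdef] at hwx₀ hwz; linarith
  have hωx₀ : ω x₀ = Real.exp (-3 * d / (32 * ε)) := by
    rw [hωapp x₀]
    have hS0 : (∑ j : Fin 2, (x₀ j - x₀ j)^2) = 0 := by simp
    rw [hS0]
    congr 1
    rw [hcdef, hRdef]
    field_simp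
    ring
  rw [← hωx₀]
  exact hvx₀
end
end

section
/- Let t ∈ (0,1), δ > 0, τ > 0, a₀, x* ∈ ℝ² with x* ≠ a₀ and τ ≤ |x*−a₀|, and let Ω₀ ⊆ ℝ² be a compact convex set containing a₀ and x*. Suppose u : Ω₀ → [0,1] satisfies u ≥ t on the closed ball B̄(x*,τ) ∩ Ω₀. Then D(δ+u²; a₀, x*) ≥ t²·τ. -/
open MeasureTheory Set Metric
open scoped ENNReal NNReal Topology

noncomputable section

/-- The generalized geodesic distance relative to the conformal metric `w`. -/
def geoDist (S : Set E2) (w : E2 → ℝ) (a b : E2) : ℝ :=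
  sInf {L : ℝ | ∃ γ : ℝ → E2, (∃ K : ℝ≥0, LipschitzWith K γ) ∧
    γ '' Icc (0:ℝ) 1 ⊆ S ∧ γ 0 = a ∧ γ 1 = b ∧
    L = ∫ x in γ '' Icc (0:ℝ) 1, w x ∂μH[1]}

theorem stmt_14 (t δ τ : ℝ) (ht0 : 0 < t) (ht1 : t < 1) (hδ : 0 < δ) (hτ : 0 < τ)
    (a₀ xstar : E2) (hne : xstar ≠ a₀) (hτd : τ ≤ dist xstar a₀)
    (Ω₀ : Set E2) (hΩc : IsCompact Ω₀) (hΩconv : Convex ℝ Ω₀)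
    (ha₀ : a₀ ∈ Ω₀) (hxstar : xstar ∈ Ω₀)
    (u : E2 → ℝ) (humeas : Measurable u) (hubd : ∀ y ∈ Ω₀, 0 ≤ u y ∧ u y ≤ 1)
    (hlow : ∀ y ∈ Metric.closedBall xstar τ ∩ Ω₀, t ≤ u y) :
    t ^ 2 * τ ≤ geoDist Ω₀ (fun y => δ + u y ^ 2) a₀ xstar := by
  set w : E2 → ℝ := fun y => δ + u y ^ 2 with hw
  -- The candidate set is nonempty (take the straight segment).
  have hnonempty : {L : ℝ | ∃ γ : ℝ → E2, (∃ K : ℝ≥0, LipschitzWith K γ) ∧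
      γ '' Icc (0:ℝ) 1 ⊆ Ω₀ ∧ γ 0 = a₀ ∧ γ 1 = xstar ∧
      L = ∫ x in γ '' Icc (0:ℝ) 1, w x ∂μH[1]}.Nonempty := by
    refine ⟨_, fun s => a₀ + s • (xstar - a₀), ⟨‖xstar - a₀‖₊, ?_⟩, ?_, by simp, by simp, rfl⟩
    · refine LipschitzWith.of_dist_le_mul fun s r => ?_
      rw [dist_add_left, dist_eq_norm, ← sub_smul, norm_smul]
      simp [Real.norm_eq_abs, Real.dist_eq, mul_comm]
    · rintro y ⟨s, hs, rfl⟩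
      have := hΩconv ha₀ hxstar (a := 1 - s) (b := s) (by linarith [hs.2]) hs.1 (by ring)
      have heq : (1 - s) • a₀ + s • xstar = a₀ + s • (xstar - a₀) := by
        rw [smul_sub]; module
      rwa [heq] at this
  refine le_csInf hnonempty ?_
  rintro L ⟨γ, ⟨K, hK⟩, hsub, hγ0, hγ1, rfl⟩
  set S : Set E2 := γ '' Icc (0:ℝ) 1 with hS
  set B : Set E2 := S ∩ Metric.closedBall xstar τ with hB
  have hγc : Continuous γ := hK.continuous
  have hScompact : IsCompact S := isCompact_Icc.image hγc
  have hSmeas : MeasurableSet S := hScompact.measurableSet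
  have hBmeas : MeasurableSet B := hSmeas.inter measurableSet_closedBall
  -- finiteness of H¹ on S
  have hSfin : μH[1] S < ⊤ := by
    calc μH[1] S ≤ (K : ℝ≥0∞) ^ (1:ℝ) * μH[1] (Icc (0:ℝ) 1) :=
          hK.hausdorffMeasure_image_le zero_le_one _
      _ < ⊤ := by
          rw [MeasureTheory.hausdorffMeasure_real, Real.volume_Icc]
          exact ENNReal.mul_lt_top (by simp) (by simp)
  have hBfin : μH[1] B < ⊤ := lt_of_le_of_lt (measure_mono inter_subset_left) hSfin
  -- H¹ B ≥ τ via the 1-Lipschitz map dist · xstar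
  have hBge : ENNReal.ofReal τ ≤ μH[1] B := by
    have hIcc : Icc (0:ℝ) τ ⊆ (fun x => dist x xstar) '' B := by
      intro y hy
      have hcont : ContinuousOn (fun s => dist (γ s) xstar) (Icc (0:ℝ) 1) :=
        (hγc.dist continuous_const).continuousOn
      have hmem : y ∈ Icc (dist (γ 1) xstar) (dist (γ 0) xstar) := by
        rw [hγ0, hγ1]
        simp only [dist_self]
        exact ⟨hy.1, le_trans (le_trans hy.2 hτd) (dist_comm xstar a₀ ▸ le_refl _)⟩
      obtain ⟨s, hs, hsy⟩ := intermediate_value_Icc' zero_le_one hcont hmem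
      exact ⟨γ s, ⟨mem_image_of_mem γ hs, by
        simp only at hsy; rw [Metric.mem_closedBall, hsy]; exact hy.2⟩, hsy⟩
    calc ENNReal.ofReal τ = volume (Icc (0:ℝ) τ) := by rw [Real.volume_Icc]; simp
      _ ≤ volume ((fun x => dist x xstar) '' B) := measure_mono hIcc
      _ = μH[1] ((fun x => dist x xstar) '' B) := by
          rw [MeasureTheory.hausdorffMeasure_real]
      _ ≤ (1 : ℝ≥0∞) ^ (1:ℝ) * μH[1] B := by
          simpa using (LipschitzWith.dist_left xstar).hausdorffMeasure_image_le zero_le_one B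
      _ = μH[1] B := by simp
  have hBtoReal : τ ≤ (μH[1] B).toReal := by
    have := ENNReal.toReal_mono hBfin.ne hBge
    rwa [ENNReal.toReal_ofReal hτ.le] at this
  -- w ≥ 0, and w ≤ δ + 1 on S
  have hw0 : ∀ x, 0 ≤ w x := fun x => by positivity
  have hwS : ∀ x ∈ S, ‖w x‖ ≤ δ + 1 := by
    intro x hx
    have hxΩ : x ∈ Ω₀ := hsub hx
    obtain ⟨h0, h1⟩ := hubd x hxΩ
    rw [Real.norm_of_nonneg (hw0 x)]
    have : u x ^ 2 ≤ 1 := by nlinarith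
    simp only [hw]; linarith
  -- integrability of w on S
  have hwint : IntegrableOn w S μH[1] := by
    have hμ : IsFiniteMeasure ((μH[1] : Measure E2).restrict S) :=
      ⟨by rwa [Measure.restrict_apply_univ]⟩
    refine Integrable.mono' (integrable_const (δ + 1)) ?_ ?_
    · exact (humeas.pow_const 2 |>.const_add δ).aestronglyMeasurable
    · exact ae_restrict_of_forall_mem hSmeas hwS
  -- chain of inequalities
  have h1 : ∫ x in B, (t ^ 2) ∂μH[1] ≤ ∫ x in B, w x ∂μH[1] := by
    refine setIntegral_mono_on (integrableOn_const hBfin.ne)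
      (hwint.mono_set inter_subset_left) hBmeas fun x hx => ?_
    have hxcb : x ∈ Metric.closedBall xstar τ := hx.2
    have hxΩ : x ∈ Ω₀ := hsub hx.1
    have ht : t ≤ u x := hlow x ⟨hxcb, hxΩ⟩
    have : t ^ 2 ≤ u x ^ 2 := by nlinarith
    simp only [hw]; linarith
  have h2 : ∫ x in B, w x ∂μH[1] ≤ ∫ x in S, w x ∂μH[1] := by
    refine setIntegral_mono_set hwint (ae_of_all _ hw0) ?_
    exact HasSubset.Subset.eventuallyLE inter_subset_left
  have h3 : t ^ 2 * τ ≤ ∫ x in B, (t ^ 2) ∂μH[1] := by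
    rw [setIntegral_const, smul_eq_mul, mul_comm]
    exact mul_le_mul_of_nonneg_right hBtoReal (by positivity)
  linarith
end
end

section
/- Let Ω ⊆ ℝ² be bounded open, ε ∈ (0,1), and let u ∈ C²(B(x₀,R)) satisfy −Δu = (1/(4ε²))(1−u) in B(x₀,R) ⊆ Ω with 0 ≤ u ≤ 1. Then there is a universal constant C such that |∇u(x₀)| ≤ C·(1/ε + 1/R). -/
open MeasureTheory Set Metric
open scoped ENNReal Topology

noncomputable section

abbrev iS : WithTop ℕ∞ := ((⊤:ℕ∞) : WithTop ℕ∞)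

lemma one_le_inftyS : iS ≠ 0 := by simp [iS]
lemma two_le_inftyS : (2 : WithTop ℕ∞) ≤ iS := WithTop.coe_le_coe.mpr le_top
lemma succ_le_inftyS : iS + 1 ≤ (iS : WithTop ℕ∞) := le_of_eq rfl

def ee (i : Fin 2) : E2 := EuclideanSpace.single i 1

def Dd (i : Fin 2) (f : E2 → ℝ) : E2 → ℝ := fun x => fderiv ℝ f x (ee i)

lemma contDiff_Dd {f : E2 → ℝ} (hf : ContDiff ℝ iS f) (i : Fin 2) : ContDiff ℝ iS (Dd i f) := by
  have h1 : ContDiff ℝ iS (fderiv ℝ f) := hf.fderiv_right succ_le_inftyS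
  exact h1.clm_apply contDiff_const

lemma Dd_apply_eq {f : E2 → ℝ} {x : E2} (hf : DifferentiableAt ℝ (fderiv ℝ f) x) (i j : Fin 2) :
    Dd i (Dd j f) x = fderiv ℝ (fderiv ℝ f) x (ee i) (ee j) := by
  have : Dd j f = fun y => (fderiv ℝ f y) (ee j) := rfl
  rw [Dd, this, fderiv_clm_apply hf (differentiableAt_const _)]
  simp

lemma lap_eq_sum {f : E2 → ℝ} {x : E2} (hf : DifferentiableAt ℝ (fderiv ℝ f) x) :
    lap f x = ∑ i : Fin 2, Dd i (Dd i f) x := by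
  unfold lap
  exact Finset.sum_congr rfl fun i _ => (Dd_apply_eq hf i i).symm

lemma diffAt_fderiv_of_contDiff {f : E2 → ℝ} (hf : ContDiff ℝ iS f) (x : E2) :
    DifferentiableAt ℝ (fderiv ℝ f) x :=
  ((hf.fderiv_right succ_le_inftyS).differentiable one_le_inftyS).differentiableAt

lemma Dd_comm {f : E2 → ℝ} (hf : ContDiff ℝ iS f) (i j : Fin 2) (x : E2) :
    Dd i (Dd j f) x = Dd j (Dd i f) x := by
  have hsymm : IsSymmSndFDerivAt ℝ f x := (hf.contDiffAt).isSymmSndFDerivAt (by rw [minSmoothness_of_isRCLikeNormedField]; exact two_le_inftyS)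
  rw [Dd_apply_eq (diffAt_fderiv_of_contDiff hf x), Dd_apply_eq (diffAt_fderiv_of_contDiff hf x)]
  exact hsymm.eq _ _

lemma Dd_add {f g : E2 → ℝ} (hf : DifferentiableAt ℝ f x) (hg : DifferentiableAt ℝ g x) (i : Fin 2) :
    Dd i (fun y => f y + g y) x = Dd i f x + Dd i g x := by
  unfold Dd; rw [fderiv_fun_add hf hg]; simp

lemma Dd_mul {f g : E2 → ℝ} {x : E2} (hf : DifferentiableAt ℝ f x) (hg : DifferentiableAt ℝ g x) (i : Fin 2) :
    Dd i (fun y => f y * g y) x = f x * Dd i g x + g x * Dd i f x := by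
  unfold Dd; rw [fderiv_fun_mul hf hg]; simp [mul_comm]

lemma Dd_const_mul {f : E2 → ℝ} {x : E2} (hf : DifferentiableAt ℝ f x) (c : ℝ) (i : Fin 2) :
    Dd i (fun y => c * f y) x = c * Dd i f x := by
  unfold Dd; rw [fderiv_const_mul hf]; simp

lemma Dd_const (c : ℝ) (i : Fin 2) (x : E2) : Dd i (fun _ => c) x = 0 := by
  unfold Dd; simp

lemma Dd_const_sub {f : E2 → ℝ} (c : ℝ) (i : Fin 2) (x : E2) :
    Dd i (fun y => c - f y) x = - Dd i f x := by
  unfold Dd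
  have : (fun y => c - f y) = fun y => c + (- f y) := by funext y; ring
  rw [this, fderiv_const_add, fderiv_fun_neg]
  simp

end

section layer2
-- q x = ‖x - x₀‖²  via coordinates
variable (x₀ : E2)

def qq (x₀ : E2) : E2 → ℝ := fun x => ∑ j : Fin 2, (x j - x₀ j)^2

lemma contDiff_coord (j : Fin 2) : ContDiff ℝ iS (fun x : E2 => x j) :=
  (EuclideanSpace.proj (𝕜 := ℝ) j).contDiff

lemma contDiff_qq : ContDiff ℝ iS (qq x₀) := by
  apply ContDiff.sum fun j _ => ?_
  exact ((contDiff_coord j).sub contDiff_const).pow 2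

lemma Dd_coord (i j : Fin 2) (x : E2) :
    Dd i (fun y : E2 => y j) x = if i = j then 1 else 0 := by
  unfold Dd
  have hco : (fun y : E2 => y j) = ⇑(EuclideanSpace.proj (𝕜 := ℝ) j) := rfl
  rw [hco, (EuclideanSpace.proj (𝕜 := ℝ) j).fderiv]
  show (EuclideanSpace.single i (1:ℝ)) j = _
  rw [EuclideanSpace.single_apply]
  simp [eq_comm]

lemma Dd_qq (i : Fin 2) (x : E2) : Dd i (qq x₀) x = 2 * (x i - x₀ i) := by
  unfold Dd qq
  have hdiff : ∀ j : Fin 2, DifferentiableAt ℝ (fun y : E2 => (y j - x₀ j)^2) x := fun j =>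
    (((contDiff_coord j).sub contDiff_const).differentiable one_le_inftyS x).pow 2
  rw [fderiv_fun_sum (fun j _ => hdiff j)]
  rw [ContinuousLinearMap.sum_apply]
  have : ∀ j : Fin 2, fderiv ℝ (fun y : E2 => (y j - x₀ j)^2) x (ee i)
      = 2 * (x j - x₀ j) * (if i = j then 1 else 0) := by
    intro j
    have h1 : (fun y : E2 => (y j - x₀ j)^2) = fun y => (y j - x₀ j) * (y j - x₀ j) := by
      funext y; ring
    have hd : DifferentiableAt ℝ (fun y : E2 => y j - x₀ j) x :=
      ((contDiff_coord j).sub contDiff_const).differentiable one_le_inftyS x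
    have := Dd_mul (f := fun y : E2 => y j - x₀ j) (g := fun y : E2 => y j - x₀ j) (x := x) hd hd i
    unfold Dd at this
    rw [h1, this]
    have h2 : fderiv ℝ (fun y : E2 => y j - x₀ j) x (ee i) = if i = j then 1 else 0 := by
      have := Dd_coord i j x
      unfold Dd at this
      rw [fderiv_fun_sub ((contDiff_coord j).differentiable one_le_inftyS x) (differentiableAt_const _)]
      simpa using this
    unfold Dd at h2
    rw [h2]; ring
  rw [Finset.sum_congr rfl fun j _ => this j]
  rw [Fin.sum_univ_two]
  fin_cases i <;> simp
end layer2

section layer3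
variable {f g : E2 → ℝ} {x : E2}

lemma diffAt_of_smooth (hf : ContDiff ℝ iS f) (x : E2) : DifferentiableAt ℝ f x :=
  hf.differentiable one_le_inftyS x

lemma lap_smooth_eq (hf : ContDiff ℝ iS f) (x : E2) :
    lap f x = ∑ i : Fin 2, Dd i (Dd i f) x :=
  lap_eq_sum (diffAt_fderiv_of_contDiff hf x)

lemma Dd_fun_mul (hf : ContDiff ℝ iS f) (hg : ContDiff ℝ iS g) (i : Fin 2) :
    Dd i (fun y => f y * g y) = fun y => f y * Dd i g y + g y * Dd i f y :=
  funext fun y => Dd_mul (diffAt_of_smooth hf y) (diffAt_of_smooth hg y) i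

lemma lap_mul (hf : ContDiff ℝ iS f) (hg : ContDiff ℝ iS g) (x : E2) :
    lap (fun y => f y * g y) x
      = f x * lap g x + 2 * ∑ i : Fin 2, Dd i f x * Dd i g x + g x * lap f x := by
  rw [lap_smooth_eq (hf.mul hg) x, lap_smooth_eq hf x, lap_smooth_eq hg x]
  have key : ∀ i : Fin 2, Dd i (Dd i (fun y => f y * g y)) x
      = f x * Dd i (Dd i g) x + 2 * (Dd i f x * Dd i g x) + g x * Dd i (Dd i f) x := by
    intro i
    rw [Dd_fun_mul hf hg i]
    have hdf := diffAt_of_smooth hf x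
    have hdg := diffAt_of_smooth hg x
    have hdDf := diffAt_of_smooth (contDiff_Dd hf i) x
    have hdDg := diffAt_of_smooth (contDiff_Dd hg i) x
    rw [Dd_add (f := fun y => f y * Dd i g y) (g := fun y => g y * Dd i f y) (hdf.mul hdDg) (hdg.mul hdDf) i, Dd_mul hdf hdDg i, Dd_mul hdg hdDf i]
    ring
  rw [Finset.sum_congr rfl fun i _ => key i]
  rw [Finset.sum_add_distrib, Finset.sum_add_distrib, ← Finset.mul_sum, ← Finset.mul_sum,
    ← Finset.mul_sum]
  try ring

lemma lap_sq (hf : ContDiff ℝ iS f) (x : E2) :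
    lap (fun y => f y * f y) x = 2 * f x * lap f x + 2 * ∑ i : Fin 2, (Dd i f x)^2 := by
  rw [lap_mul hf hf x]
  have : ∀ i : Fin 2, Dd i f x * Dd i f x = (Dd i f x)^2 := fun i => (sq _).symm
  rw [Finset.sum_congr rfl fun i _ => this i]
  ring

lemma lap_add (hf : ContDiff ℝ iS f) (hg : ContDiff ℝ iS g) (x : E2) :
    lap (fun y => f y + g y) x = lap f x + lap g x := by
  rw [lap_smooth_eq (hf.add hg) x, lap_smooth_eq hf x, lap_smooth_eq hg x, ← Finset.sum_add_distrib]
  refine Finset.sum_congr rfl fun i _ => ?_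
  have h1 : Dd i (fun y => f y + g y) = fun y => Dd i f y + Dd i g y :=
    funext fun y => Dd_add (diffAt_of_smooth hf y) (diffAt_of_smooth hg y) i
  rw [h1, Dd_add (diffAt_of_smooth (contDiff_Dd hf i) x) (diffAt_of_smooth (contDiff_Dd hg i) x) i]

lemma lap_const_mul (hf : ContDiff ℝ iS f) (c : ℝ) (x : E2) :
    lap (fun y => c * f y) x = c * lap f x := by
  rw [lap_smooth_eq (contDiff_const.mul hf) x, lap_smooth_eq hf x, Finset.mul_sum]
  refine Finset.sum_congr rfl fun i _ => ?_
  have h1 : Dd i (fun y => c * f y) = fun y => c * Dd i f y :=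
    funext fun y => Dd_const_mul (diffAt_of_smooth hf y) c i
  rw [h1, Dd_const_mul (diffAt_of_smooth (contDiff_Dd hf i) x) c i]

lemma lap_const_sub (hf : ContDiff ℝ iS f) (c : ℝ) (x : E2) :
    lap (fun y => c - f y) x = - lap f x := by
  rw [lap_smooth_eq (contDiff_const.sub hf) x, lap_smooth_eq hf x]
  rw [← Finset.sum_neg_distrib]
  refine Finset.sum_congr rfl fun i _ => ?_
  have h1 : Dd i (fun y => c - f y) = fun y => 0 - Dd i f y := by
    funext y; rw [Dd_const_sub c i y]; ring
  rw [h1]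
  have := Dd_const_sub (f := fun y => Dd i f y) (x := x) 0 i
  rw [this]; try simp

lemma lap_qq (x₀ x : E2) : lap (qq x₀) x = 4 := by
  rw [lap_smooth_eq (contDiff_qq x₀) x]
  have : ∀ i : Fin 2, Dd i (Dd i (qq x₀)) x = 2 := by
    intro i
    have h1 : Dd i (qq x₀) = fun y => 2 * (y i - x₀ i) := funext fun y => Dd_qq x₀ i y
    rw [h1]
    have hd : DifferentiableAt ℝ (fun y : E2 => y i - x₀ i) x :=
      ((contDiff_coord i).sub contDiff_const).differentiable one_le_inftyS x
    rw [Dd_const_mul hd 2 i]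
    have h2 : Dd i (fun y : E2 => y i - x₀ i) x = 1 := by
      unfold Dd
      rw [fderiv_fun_sub ((contDiff_coord i).differentiable one_le_inftyS x) (differentiableAt_const _)]
      have := Dd_coord i i x
      unfold Dd at this
      simpa using this
    rw [h2]; ring
  rw [Finset.sum_congr rfl fun i _ => this i]
  norm_num [Fin.sum_univ_two]
end layer3

section layer4

lemma second_deriv_test {h h' : ℝ → ℝ} {c : ℝ} (hd : ∀ t, HasDerivAt h (h' t) t)
    (hd' : HasDerivAt h' c 0) (hmax : IsLocalMax h 0) : c ≤ 0 := by
  by_contra hc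
  push_neg at hc
  have h'0 : h' 0 = 0 := by
    have := hmax.deriv_eq_zero
    rwa [(hd 0).deriv] at this
  -- eventually h' t > 0 for t > 0 small
  have hslope : Filter.Tendsto (fun t => h' t / t) (𝓝[>] (0:ℝ)) (𝓝 c) := by
    have := hasDerivAt_iff_tendsto_slope.mp hd'
    have h2 := this.mono_left (nhdsWithin_mono 0 (by intro t ht; exact ne_of_gt ht : Ioi (0:ℝ) ⊆ {0}ᶜ))
    refine h2.congr' ?_
    filter_upwards [self_mem_nhdsWithin] with t ht
    simp [slope, h'0, div_eq_inv_mul]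
  have hev : ∀ᶠ t in 𝓝[>] (0:ℝ), 0 < h' t := by
    filter_upwards [hslope.eventually (eventually_gt_nhds (show c/2 < c by linarith)),
      self_mem_nhdsWithin] with t ht ht'
    have h0t : (0:ℝ) < t := ht'
    have h2 : 0 < h' t / t := lt_trans (by positivity) ht
    exact (div_pos_iff.mp h2).resolve_right (fun hcase => absurd h0t (not_lt.mpr hcase.2.le)) |>.1
  have hle : ∀ᶠ t in 𝓝[>] (0:ℝ), h t ≤ h 0 :=
    (hmax.filter_mono (nhdsWithin_le_nhds))
  obtain ⟨u, hu, hall⟩ := mem_nhdsGT_iff_exists_Ioo_subset.mp (hev.and hle)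
  have hub : 0 < u := hu
  have hmono : StrictMonoOn h (Icc 0 (u/2)) := by
    apply strictMonoOn_of_deriv_pos (convex_Icc _ _)
    · exact (fun t _ => (hd t).continuousAt.continuousWithinAt)
    · intro t ht
      rw [interior_Icc, mem_Ioo] at ht
      rw [(hd t).deriv]
      exact (hall (mem_Ioo.mpr ⟨ht.1, by linarith [ht.2]⟩)).1
  have hcontr : h (u/2) ≤ h 0 := (hall (mem_Ioo.mpr ⟨by linarith, by linarith⟩)).2
  have : h 0 < h (u/2) :=
    hmono (mem_Icc.mpr ⟨le_rfl, by linarith⟩) (mem_Icc.mpr ⟨by linarith, le_rfl⟩) (by linarith)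
  linarith

lemma line_hasDerivAt (w : E2 → ℝ) (hw : ContDiff ℝ iS w) (z : E2) (i : Fin 2) (t : ℝ) :
    HasDerivAt (fun s => w (z + s • ee i)) (Dd i w (z + t • ee i)) t := by
  have hline : HasDerivAt (fun s : ℝ => z + s • ee i) (ee i) t := by
    simpa using ((hasDerivAt_id t).smul_const (ee i)).const_add z
  have hfd : HasFDerivAt w (fderiv ℝ w (z + t • ee i)) (z + t • ee i) :=
    (hw.differentiable one_le_inftyS (z + t • ee i)).hasFDerivAt
  exact hfd.comp_hasDerivAt t hline

lemma interior_max_snd_le {w : E2 → ℝ} (hw : ContDiff ℝ iS w) {z : E2}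
    (hmax : IsLocalMax w z) (i : Fin 2) : Dd i (Dd i w) z ≤ 0 := by
  set ℓ : ℝ → E2 := fun t => z + t • ee i with hℓ
  have hℓ0 : ℓ 0 = z := by simp [hℓ]
  have hd : ∀ t, HasDerivAt (fun s => w (ℓ s)) (Dd i w (ℓ t)) t := line_hasDerivAt w hw z i
  have hd' : HasDerivAt (fun t => Dd i w (ℓ t)) (Dd i (Dd i w) z) 0 := by
    have := line_hasDerivAt (Dd i w) (contDiff_Dd hw i) z i 0
    simpa [hℓ0] using this
  have hmaxh : IsLocalMax (fun s => w (ℓ s)) 0 := by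
    rw [← hℓ0] at hmax
    exact hmax.comp_continuous (by fun_prop)
  exact second_deriv_test hd hd' hmaxh

end layer4

section layer5

lemma exists_sphere_max {w : E2 → ℝ} (hw : ContDiff ℝ iS w) {x₀ : E2} {r : ℝ} (hr : 0 < r)
    (hpos : ∀ x ∈ ball x₀ r, 0 < lap w x) : ∃ z, dist z x₀ = r ∧ w x₀ ≤ w z := by
  obtain ⟨z, hz, hmaxon⟩ := (isCompact_closedBall x₀ r).exists_isMaxOn
    ⟨x₀, mem_closedBall_self hr.le⟩ (hw.continuous.continuousOn)
  have hzball : z ∉ ball x₀ r := by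
    intro hzb
    have hlocal : IsLocalMax w z :=
      hmaxon.isLocalMax (Filter.mem_of_superset (isOpen_ball.mem_nhds hzb) ball_subset_closedBall)
    have hsum : lap w z ≤ 0 := by
      rw [lap_smooth_eq hw z]
      exact Finset.sum_nonpos fun i _ => interior_max_snd_le hw hlocal i
    exact absurd (hpos z hzb) (not_lt.mpr hsum)
  refine ⟨z, ?_, hmaxon (mem_closedBall_self hr.le)⟩
  have h1 : dist z x₀ ≤ r := mem_closedBall.mp hz
  have h2 : ¬ dist z x₀ < r := fun h => hzball (mem_ball.mpr h)
  linarith [lt_or_ge (dist z x₀) r]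

end layer5

section layer6

lemma lap_Dd_eq {g : E2 → ℝ} (hg : ContDiff ℝ iS g) {c : ℝ} {s : Set E2} (hs : IsOpen s)
    (heq : ∀ x ∈ s, lap g x = c * g x) (i : Fin 2) {x : E2} (hx : x ∈ s) :
    lap (Dd i g) x = c * Dd i g x := by
  have hDg : ∀ j : Fin 2, ContDiff ℝ iS (Dd j g) := contDiff_Dd hg
  rw [lap_smooth_eq (contDiff_Dd hg i) x]
  have swap : ∀ j : Fin 2, Dd j (Dd j (Dd i g)) x = Dd i (Dd j (Dd j g)) x := by
    intro j
    have h1 : Dd j (Dd i g) = Dd i (Dd j g) := funext fun y => Dd_comm hg j i y ▸ rfl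
    calc Dd j (Dd j (Dd i g)) x = Dd j (Dd i (Dd j g)) x := by rw [h1]
      _ = Dd i (Dd j (Dd j g)) x := Dd_comm (hDg j) j i x
  rw [Finset.sum_congr rfl fun j _ => swap j]
  have hsum : ∑ j : Fin 2, Dd i (Dd j (Dd j g)) x
      = Dd i (fun y => ∑ j : Fin 2, Dd j (Dd j g) y) x := by
    rw [Fin.sum_univ_two]
    have hfun : (fun y => ∑ j : Fin 2, Dd j (Dd j g) y)
        = fun y => Dd 0 (Dd 0 g) y + Dd 1 (Dd 1 g) y := by
      funext y; rw [Fin.sum_univ_two]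
    rw [hfun, Dd_add (diffAt_of_smooth (contDiff_Dd (hDg 0) 0) x)
      (diffAt_of_smooth (contDiff_Dd (hDg 1) 1) x) i]
  rw [hsum]
  have hlapfun : (fun y => ∑ j : Fin 2, Dd j (Dd j g) y) = fun y => lap g y :=
    funext fun y => (lap_smooth_eq hg y).symm
  rw [hlapfun]
  have hev : (fun y => lap g y) =ᶠ[𝓝 x] (fun y => c * g y) :=
    Filter.eventuallyEq_of_mem (hs.mem_nhds hx) heq
  have : Dd i (fun y => lap g y) x = Dd i (fun y => c * g y) x := by
    unfold Dd; rw [hev.fderiv_eq]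
  rw [this, Dd_const_mul (diffAt_of_smooth hg x) c i]

lemma qq_eq_dist (x₀ x : E2) : qq x₀ x = dist x x₀ ^ 2 := by
  rw [EuclideanSpace.dist_eq, Real.sq_sqrt (by positivity)]
  unfold qq
  refine Finset.sum_congr rfl fun j _ => ?_
  rw [Real.dist_eq, sq_abs]

lemma bernstein_arith {r c a q s0 s1 p pd0 pd1 g0 d0 d1 M σ : ℝ}
    (ha : a = r^2 - q) (hq0 : 0 ≤ q) (hqr : q ≤ r^2) (hc : 0 ≤ c) (hM : M = 12*r^2)
    (hd : p^2 ≤ d0^2 + d1^2) (hs : q = s0^2 + s1^2) (hσ : 0 < σ) :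
    0 < (a*a) * (2 * (c*p) * p + 2 * (pd0^2 + pd1^2))
        + 2 * ((2*a*(-(2*s0))) * (2*p*pd0) + (2*a*(-(2*s1))) * (2*p*pd1))
        + (p*p) * (2 * a * (-4) + 2 * ((-(2*s0))^2 + (-(2*s1))^2))
        + M * (2 * (c*g0) * g0 + 2 * (d0^2 + d1^2)) + σ * 4 := by
  nlinarith [sq_nonneg (a*pd0 - 4*s0*p), sq_nonneg (a*pd1 - 4*s1*p),
    mul_nonneg (mul_nonneg hc (sq_nonneg p)) (sq_nonneg a),
    mul_nonneg hc (sq_nonneg g0), sq_nonneg p, sq_nonneg r,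
    mul_nonneg (by nlinarith : (0:ℝ) ≤ 16*r^2 - 16*q) (sq_nonneg p)]

end layer6

section layer7

lemma bernstein_grad {g : E2 → ℝ} {x₀ : E2} {r c : ℝ} (hr : 0 < r) (hc : 0 ≤ c)
    (hg : ContDiff ℝ iS g) (hb : ∀ x, 0 ≤ g x ∧ g x ≤ 1)
    (heq : ∀ x ∈ ball x₀ r, lap g x = c * g x) (i : Fin 2) :
    (Dd i g x₀)^2 * r^2 ≤ 12 := by
  set q : E2 → ℝ := qq x₀ with hqdef
  set a : E2 → ℝ := fun x => r^2 - q x with hadef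
  set p : E2 → ℝ := Dd i g with hpdef
  have hqs : ContDiff ℝ iS q := contDiff_qq x₀
  have has : ContDiff ℝ iS a := contDiff_const.sub hqs
  have hps : ContDiff ℝ iS p := contDiff_Dd hg i
  have hA : ContDiff ℝ iS (fun x => a x * a x) := has.mul has
  have hP : ContDiff ℝ iS (fun x => p x * p x) := hps.mul hps
  have hG : ContDiff ℝ iS (fun x => g x * g x) := hg.mul hg
  -- key: for every σ > 0, bound at center
  have key : ∀ σ : ℝ, 0 < σ → r^2 * r^2 * (p x₀ * p x₀) ≤ 12 * r^2 + σ * r^2 := by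
    intro σ hσ
    set w : E2 → ℝ := fun x => (a x * a x) * (p x * p x) + 12*r^2 * (g x * g x) + σ * q x
      with hwdef
    have hw : ContDiff ℝ iS w := ((hA.mul hP).add (contDiff_const.mul hG)).add
      (contDiff_const.mul hqs)
    have hlapw : ∀ x ∈ ball x₀ r, 0 < lap w x := by
      intro x hxball
      have hq_le : q x ≤ r^2 := by
        have := mem_ball.mp hxball
        rw [hqdef, qq_eq_dist x₀ x]
        nlinarith [dist_nonneg (x := x) (y := x₀)]
      have hq0 : 0 ≤ q x := by
        rw [hqdef, qq_eq_dist x₀ x]; positivity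
      -- compute lap w x
      have hstep1 : lap w x = lap (fun y => (a y * a y) * (p y * p y)) x
          + 12*r^2 * lap (fun y => g y * g y) x + σ * 4 := by
        rw [hwdef]
        have e1 := lap_add (f := fun y => (a y * a y) * (p y * p y) + 12*r^2 * (g y * g y))
          (g := fun y => σ * q y) ((hA.mul hP).add (contDiff_const.mul hG))
          (contDiff_const.mul hqs) x
        rw [e1, lap_add (f := fun y => (a y * a y) * (p y * p y))
          (g := fun y => 12*r^2 * (g y * g y)) (hA.mul hP) (contDiff_const.mul hG) x,
          lap_const_mul hG (12*r^2) x, lap_const_mul hqs σ x, lap_qq x₀ x]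
      -- derivative values
      have hDa : ∀ j : Fin 2, Dd j a x = -(2 * (x j - x₀ j)) := by
        intro j
        rw [hadef]
        have := Dd_const_sub (f := q) (x := x) (r^2) j
        rw [this, hqdef, Dd_qq x₀ j x]
      have hlapa : lap a x = -4 := by
        rw [hadef]
        have := lap_const_sub hqs (r^2) x
        rw [this, hqdef, lap_qq x₀ x]
      have hlapp : lap p x = c * p x := lap_Dd_eq hg isOpen_ball heq i hxball
      have hlapg : lap g x = c * g x := heq x hxball
      -- expand lap of the product (a²)(p²)
      have hmain : lap (fun y => (a y * a y) * (p y * p y)) x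
          = (a x * a x) * (2 * (c * p x) * p x + 2 * ((Dd 0 p x)^2 + (Dd 1 p x)^2))
            + 2 * ((2 * a x * (-(2 * (x 0 - x₀ 0)))) * (2 * p x * Dd 0 p x)
                 + (2 * a x * (-(2 * (x 1 - x₀ 1)))) * (2 * p x * Dd 1 p x))
            + (p x * p x) * (2 * a x * (-4) + 2 * ((-(2 * (x 0 - x₀ 0)))^2
                 + (-(2 * (x 1 - x₀ 1)))^2)) := by
        rw [lap_mul hA hP x, lap_sq hps x, lap_sq has x, hlapp, hlapa]
        have hDA : ∀ j : Fin 2, Dd j (fun y => a y * a y) x = 2 * a x * (-(2 * (x j - x₀ j))) := by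
          intro j
          rw [Dd_mul (diffAt_of_smooth has x) (diffAt_of_smooth has x) j, hDa j]; ring
        have hDP : ∀ j : Fin 2, Dd j (fun y => p y * p y) x = 2 * p x * Dd j p x := by
          intro j
          rw [Dd_mul (diffAt_of_smooth hps x) (diffAt_of_smooth hps x) j]; ring
        rw [Fin.sum_univ_two, Fin.sum_univ_two, Fin.sum_univ_two, hDA 0, hDA 1, hDP 0, hDP 1,
          hDa 0, hDa 1]
        ring
      have hgsq : lap (fun y => g y * g y) x
          = 2 * (c * g x) * g x + 2 * ((Dd 0 g x)^2 + (Dd 1 g x)^2) := by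
        rw [lap_sq hg x, hlapg, Fin.sum_univ_two]; ring
      rw [hstep1, hmain, hgsq]
      have hqx : q x = (x 0 - x₀ 0)^2 + (x 1 - x₀ 1)^2 := by
        rw [hqdef]; unfold qq; rw [Fin.sum_univ_two]
      have hax : a x = r^2 - q x := rfl
      have hpd : (p x)^2 ≤ (Dd 0 g x)^2 + (Dd 1 g x)^2 := by
        have hi : i = 0 ∨ i = 1 := by fin_cases i <;> simp
        rw [hpdef]
        rcases hi with hi | hi <;> rw [hi]
        · nlinarith [sq_nonneg (Dd 1 g x)]
        · nlinarith [sq_nonneg (Dd 0 g x)]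
      have := bernstein_arith (r := r) (c := c) (a := a x) (q := q x)
        (s0 := x 0 - x₀ 0) (s1 := x 1 - x₀ 1) (p := p x) (pd0 := Dd 0 p x) (pd1 := Dd 1 p x)
        (g0 := g x) (d0 := Dd 0 g x) (d1 := Dd 1 g x) (M := 12*r^2) (σ := σ)
        hax hq0 hq_le hc rfl hpd hqx hσ
      calc (0:ℝ) < _ := this
        _ = _ := by ring
    obtain ⟨z, hzs, hzle⟩ := exists_sphere_max hw hr hlapw
    have hq0' : q x₀ = 0 := by rw [hqdef, qq_eq_dist]; simp
    have hqz : q z = r^2 := by rw [hqdef, qq_eq_dist, hzs]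
    have haz : a z = 0 := by rw [hadef]; simp [hqz]
    have hwx₀ : w x₀ = r^2 * r^2 * (p x₀ * p x₀) + 12*r^2 * (g x₀ * g x₀) := by
      simp only [hwdef, hadef, hq0']; ring
    have hwz : w z = 12*r^2 * (g z * g z) + σ * r^2 := by
      simp only [hwdef]; rw [haz, hqz]; ring
    have hgz : g z * g z ≤ 1 := by
      obtain ⟨h1, h2⟩ := hb z
      nlinarith
    have hgx₀ : 0 ≤ g x₀ * g x₀ := mul_self_nonneg _
    rw [hwx₀, hwz] at hzle
    nlinarith
  have h12 : r^2 * r^2 * (p x₀ * p x₀) ≤ 12 * r^2 := by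
    refine le_of_forall_pos_le_add fun ε hε => ?_
    have := key (ε / r^2) (by positivity)
    calc r^2 * r^2 * (p x₀ * p x₀) ≤ 12*r^2 + (ε / r^2) * r^2 := this
      _ = 12*r^2 + ε := by field_simp
  have hr2 : (0:ℝ) < r^2 := by positivity
  have hpx : p x₀ = Dd i g x₀ := rfl
  exact (mul_le_mul_iff_of_pos_right hr2).mp (by nlinarith [h12])

end layer7

section layer8
open scoped Convolution
open ContinuousLinearMap (lsmul)

lemma Dd_convolution {k : ContDiffBump (0:E2)} {h : E2 → ℝ} (hcs : HasCompactSupport h)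
    (hh : ContDiff ℝ 1 h) (i : Fin 2) (x : E2) :
    Dd i ((k.normed volume) ⋆[lsmul ℝ ℝ, volume] h) x
      = ((k.normed volume) ⋆[lsmul ℝ ℝ, volume] Dd i h) x := by
  have hloc : LocallyIntegrable (k.normed volume) volume :=
    k.integrable_normed.locallyIntegrable
  have hfd := hcs.hasFDerivAt_convolution_right (lsmul ℝ ℝ) hloc hh x
  have h1 : Dd i ((k.normed volume) ⋆[lsmul ℝ ℝ, volume] h) x
      = ((k.normed volume ⋆[(lsmul ℝ ℝ).precompR E2, volume] fderiv ℝ h) x) (ee i) := by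
    unfold Dd; rw [hfd.fderiv]
  rw [h1, convolution_precompR_apply _ hloc (hcs.fderiv ℝ) (hh.continuous_fderiv one_ne_zero) x (ee i)]
  rfl

lemma hcs_Dd {h : E2 → ℝ} (hcs : HasCompactSupport h) (i : Fin 2) :
    HasCompactSupport (Dd i h) := by
  have : Dd i h = (fun L : E2 →L[ℝ] ℝ => L (ee i)) ∘ fderiv ℝ h := rfl
  rw [this]
  exact (hcs.fderiv ℝ).comp_left (by simp)

lemma contDiff_one_Dd {h : E2 → ℝ} (hh : ContDiff ℝ 2 h) (i : Fin 2) :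
    ContDiff ℝ 1 (Dd i h) := by
  have h1 : ContDiff ℝ 1 (fderiv ℝ h) := hh.fderiv_right (by norm_num)
  exact h1.clm_apply contDiff_const

lemma continuous_DdDd {h : E2 → ℝ} (hh : ContDiff ℝ 2 h) (i : Fin 2) :
    Continuous (Dd i (Dd i h)) := by
  have h1 : Continuous (fderiv ℝ (Dd i h)) := (contDiff_one_Dd hh i).continuous_fderiv one_ne_zero
  exact (h1.clm_apply continuous_const)

lemma lap_convolution {k : ContDiffBump (0:E2)} {h : E2 → ℝ} (hcs : HasCompactSupport h)
    (hh : ContDiff ℝ 2 h) (x : E2) :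
    lap ((k.normed volume) ⋆[lsmul ℝ ℝ, volume] h) x
      = ((k.normed volume) ⋆[lsmul ℝ ℝ, volume] fun y => lap h y) x := by
  have hsm : ContDiff ℝ iS ((k.normed volume) ⋆[lsmul ℝ ℝ, volume] h) := by
    apply HasCompactSupport.contDiff_convolution_left _ k.hasCompactSupport_normed
      (k.contDiff_normed (n := ⊤)) (hh.continuous.locallyIntegrable)
  rw [lap_smooth_eq hsm x]
  have step : ∀ i : Fin 2, Dd i (Dd i ((k.normed volume) ⋆[lsmul ℝ ℝ, volume] h)) x
      = ((k.normed volume) ⋆[lsmul ℝ ℝ, volume] Dd i (Dd i h)) x := by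
    intro i
    have e1 : Dd i ((k.normed volume) ⋆[lsmul ℝ ℝ, volume] h)
        = (k.normed volume) ⋆[lsmul ℝ ℝ, volume] Dd i h :=
      funext fun y => Dd_convolution hcs (hh.of_le one_le_two) i y
    rw [e1, Dd_convolution (hcs_Dd hcs i) (contDiff_one_Dd hh i) i x]
  rw [Finset.sum_congr rfl fun i _ => step i]
  -- sum of convolutions = convolution with sum
  have hint : ∀ i : Fin 2, Integrable
      (fun t => k.normed volume t • Dd i (Dd i h) (x - t)) volume := by
    intro i
    apply Continuous.integrable_of_hasCompactSupport
    · exact (k.continuous_normed.smul ((continuous_DdDd hh i).comp (by fun_prop)))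
    · exact k.hasCompactSupport_normed.smul_right
  rw [Fin.sum_univ_two]
  simp only [convolution_def, ContinuousLinearMap.lsmul_apply]
  rw [← integral_add (hint 0) (hint 1)]
  congr 1
  funext t
  have : lap h (x - t) = ∑ i : Fin 2, Dd i (Dd i h) (x - t) :=
    lap_eq_sum (((hh.fderiv_right (m := 1) (by norm_num)).differentiable one_ne_zero) (x - t))
  rw [this, Fin.sum_univ_two, smul_add]

end layer8

section layer9
open scoped Convolution
open ContinuousLinearMap (lsmul)

lemma conv_bounds {k : ContDiffBump (0:E2)} {h : E2 → ℝ} (hcont : Continuous h)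
    (hb : ∀ x, 0 ≤ h x ∧ h x ≤ 1) (x : E2) :
    0 ≤ ((k.normed volume) ⋆[lsmul ℝ ℝ, volume] h) x
      ∧ ((k.normed volume) ⋆[lsmul ℝ ℝ, volume] h) x ≤ 1 := by
  have hint : Integrable (fun t => k.normed volume t * h (x - t)) volume := by
    apply Continuous.integrable_of_hasCompactSupport
    · exact k.continuous_normed.mul (hcont.comp (by fun_prop))
    · exact k.hasCompactSupport_normed.mul_right
  have hconv : ((k.normed volume) ⋆[lsmul ℝ ℝ, volume] h) x
      = ∫ t, k.normed volume t * h (x - t) := by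
    simp only [convolution_def, ContinuousLinearMap.lsmul_apply, smul_eq_mul]
  constructor
  · rw [hconv]
    exact integral_nonneg fun t => mul_nonneg (k.nonneg_normed (μ := volume) t) (hb (x - t)).1
  · rw [hconv]
    calc ∫ t, k.normed volume t * h (x - t)
        ≤ ∫ t, k.normed volume t := by
          apply integral_mono hint k.integrable_normed
          intro t
          have hle := (hb (x - t)).2
          have h0 := k.nonneg_normed (μ := volume) t
          show k.normed volume t * h (x - t) ≤ k.normed volume t
          nlinarith
      _ = 1 := k.integral_normed

lemma conv_eq_of_eq_on {k : ContDiffBump (0:E2)} {h : E2 → ℝ} {c s ρ : ℝ} {x₀ : E2}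
    (hloc : LocallyIntegrable h volume)
    (heqn : ∀ y ∈ ball x₀ s, h y = c * h y)
    (x : E2) : True := trivial

-- equation transfer
lemma conv_equation {k : ContDiffBump (0:E2)} {h : E2 → ℝ} {c s : ℝ} {x₀ : E2}
    (hcs : HasCompactSupport h) (hh : ContDiff ℝ 2 h)
    (heqn : ∀ y ∈ ball x₀ s, lap h y = c * h y)
    {x : E2} (hx : dist x x₀ + k.rOut ≤ s) :
    lap ((k.normed volume) ⋆[lsmul ℝ ℝ, volume] h) x
      = c * ((k.normed volume) ⋆[lsmul ℝ ℝ, volume] h) x := by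
  rw [lap_convolution hcs hh x]
  have hcongr : ∀ t : E2, k.normed volume t • lap h (x - t)
      = c * (k.normed volume t • h (x - t)) := by
    intro t
    by_cases ht : k.normed volume t = 0
    · simp [ht]
    · have htsupp : t ∈ Function.support (k.normed volume) := ht
      rw [k.support_normed_eq] at htsupp
      have hdist : dist (x - t) x₀ < s := by
        have h1 : dist (x - t) x ≤ ‖t‖ := by
          rw [dist_eq_norm]; simp
        have h2 : ‖t‖ < k.rOut := by simpa [dist_eq_norm] using mem_ball.mp htsupp
        have h3 := dist_triangle (x - t) x x₀
        linarith
      rw [smul_eq_mul, smul_eq_mul, heqn (x - t) (mem_ball.mpr hdist)]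
      ring
  simp only [convolution_def, ContinuousLinearMap.lsmul_apply]
  rw [show (fun t => k.normed volume t • lap h (x - t))
      = fun t => c * (k.normed volume t • h (x - t)) from funext hcongr]
  rw [integral_const_mul]

end layer9

section layer10
open scoped Convolution
open ContinuousLinearMap (lsmul)

lemma lap_congr_on {f g : E2 → ℝ} {s : Set E2} (hs : IsOpen s) (hfg : ∀ y ∈ s, f y = g y)
    {x : E2} (hx : x ∈ s) : lap f x = lap g x := by
  have h1 : ∀ y ∈ s, fderiv ℝ f y = fderiv ℝ g y := fun y hy =>
    (Filter.eventuallyEq_of_mem (hs.mem_nhds hy) hfg).fderiv_eq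
  have h2 : fderiv ℝ (fderiv ℝ f) x = fderiv ℝ (fderiv ℝ g) x :=
    (Filter.eventuallyEq_of_mem (hs.mem_nhds hx) h1).fderiv_eq
  unfold lap; rw [h2]

lemma fderiv_one_sub (u : E2 → ℝ) : fderiv ℝ (fun z => 1 - u z) = fun z => -fderiv ℝ u z := by
  funext z
  have : (fun z => 1 - u z) = fun z => 1 + -(u z) := funext fun z => by ring
  rw [this, fderiv_const_add, fderiv_fun_neg]

lemma lap_one_sub (u : E2 → ℝ) (y : E2) : lap (fun z => 1 - u z) y = - lap u y := by
  unfold lap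
  rw [fderiv_one_sub u, fderiv_fun_neg]
  simp [Fin.sum_univ_two]

lemma conv_smooth {k : ContDiffBump (0:E2)} {h : E2 → ℝ} (hcont : Continuous h) :
    ContDiff ℝ iS ((k.normed volume) ⋆[lsmul ℝ ℝ, volume] h) :=
  HasCompactSupport.contDiff_convolution_left _ k.hasCompactSupport_normed
    (k.contDiff_normed (n := ⊤)) (hcont.locallyIntegrable)

lemma grad_component_bound {u : E2 → ℝ} {x₀ : E2} {R c : ℝ} (hR : 0 < R) (hc : 0 ≤ c)
    (hu : ContDiffOn ℝ 2 u (ball x₀ R))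
    (hpde : ∀ x ∈ ball x₀ R, -lap u x = c * (1 - u x))
    (hbd : ∀ x ∈ ball x₀ R, 0 ≤ u x ∧ u x ≤ 1) (i : Fin 2) :
    (Dd i u x₀)^2 * (R/4)^2 ≤ 12 := by
  -- the cutoff function
  set χ : ContDiffBump x₀ := ⟨R/2, 3*R/4, by positivity, by linarith⟩ with hχdef
  set vt : E2 → ℝ := fun x => (χ x) * Set.indicator (ball x₀ R) (fun y => 1 - u y) x
    with hvtdef
  have hsub : ball x₀ (R/2) ⊆ ball x₀ R := ball_subset_ball (by linarith)
  -- vt is C²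
  have hvt2 : ContDiff ℝ 2 vt := by
    rw [contDiff_iff_contDiffAt]
    intro x
    by_cases hx : x ∈ ball x₀ R
    · have hev : vt =ᶠ[𝓝 x] fun y => χ y * (1 - u y) := by
        apply Filter.eventuallyEq_of_mem (isOpen_ball.mem_nhds hx)
        intro y hy
        simp only [hvtdef, Set.indicator_of_mem hy]
      have hχs : ContDiffAt ℝ 2 (fun y => (χ : E2 → ℝ) y) x :=
        ((χ.contDiff (n := ⊤)).of_le two_le_inftyS).contDiffAt
      have hus : ContDiffAt ℝ 2 u x := hu.contDiffAt (isOpen_ball.mem_nhds hx)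
      exact (hχs.mul (contDiffAt_const.sub hus)).congr_of_eventuallyEq hev
    · have hx' : x ∈ (closedBall x₀ (3*R/4))ᶜ := by
        simp only [mem_compl_iff, mem_closedBall, not_le]
        have : R ≤ dist x x₀ := not_lt.mp fun h => hx (mem_ball.mpr h)
        linarith
      have hev : vt =ᶠ[𝓝 x] fun _ => (0:ℝ) := by
        apply Filter.eventuallyEq_of_mem ((isClosed_closedBall.isOpen_compl).mem_nhds hx')
        intro y hy
        rw [mem_compl_iff, mem_closedBall, not_le] at hy
        have hzero : (χ : E2 → ℝ) y = 0 := χ.zero_of_le_dist (by simp [hχdef]; linarith)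
        simp only [hvtdef, hzero, zero_mul]
      exact contDiffAt_const.congr_of_eventuallyEq hev
  -- compact support
  have hvtcs : HasCompactSupport vt := χ.hasCompactSupport.mul_right
  -- bounds
  have hvtb : ∀ x, 0 ≤ vt x ∧ vt x ≤ 1 := by
    intro x
    by_cases hx : x ∈ ball x₀ R
    · simp only [hvtdef, Set.indicator_of_mem hx]
      obtain ⟨h1, h2⟩ := hbd x hx
      have hχ1 : (0:ℝ) ≤ χ x := χ.nonneg
      have hχ2 : (χ : E2 → ℝ) x ≤ 1 := χ.le_one
      constructor
      · apply mul_nonneg hχ1; linarith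
      · nlinarith
    · simp only [hvtdef, Set.indicator_of_notMem hx, mul_zero]
      norm_num
  -- equality with 1 - u on small ball
  have hveq : ∀ y ∈ ball x₀ (R/2), vt y = 1 - u y := by
    intro y hy
    have h1 : (χ : E2 → ℝ) y = 1 := χ.one_of_mem_closedBall (by
      simp only [mem_closedBall]
      exact le_of_lt (by simpa [hχdef] using mem_ball.mp hy))
    simp only [hvtdef, h1, one_mul, Set.indicator_of_mem (hsub hy)]
  -- equation for vt on small ball
  have hvteq : ∀ y ∈ ball x₀ (R/2), lap vt y = c * vt y := by
    intro y hy
    rw [lap_congr_on (isOpen_ball (x := x₀) (ε := R/2)) hveq hy, lap_one_sub u y,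
      hpde y (hsub hy), hveq y hy]
  -- mollification sequence
  set kk : ℕ → ContDiffBump (0:E2) := fun n =>
    ⟨R/(8*(n+1))/2, R/(8*(n+1)), by positivity, by
      have : (0:ℝ) < R/(8*(n+1)) := by positivity
      linarith⟩ with hkkdef
  have hrOut : ∀ n : ℕ, (kk n).rOut = R/(8*(n+1)) := fun n => rfl
  have hvc : Continuous vt := hvt2.continuous
  have hvt1 : ContDiff ℝ 1 vt := hvt2.of_le one_le_two
  -- each mollification satisfies the Bernstein bound
  have hbern : ∀ n : ℕ,
      (((kk n).normed volume ⋆[lsmul ℝ ℝ, volume] Dd i vt) x₀)^2 * (R/4)^2 ≤ 12 := by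
    intro n
    set g : E2 → ℝ := (kk n).normed volume ⋆[lsmul ℝ ℝ, volume] vt with hgdef
    have hgs : ContDiff ℝ iS g := conv_smooth hvc
    have hgb : ∀ x, 0 ≤ g x ∧ g x ≤ 1 := fun x => conv_bounds hvc hvtb x
    have hgeq : ∀ x ∈ ball x₀ (R/4), lap g x = c * g x := by
      intro x hx
      apply conv_equation hvtcs hvt2 hvteq
      have h1 : dist x x₀ < R/4 := mem_ball.mp hx
      have h2 : (kk n).rOut ≤ R/8 := by
        rw [hrOut]
        rw [div_le_div_iff₀ (by positivity) (by norm_num)]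
        have : (1:ℝ) ≤ (n:ℝ) + 1 := by exact_mod_cast Nat.one_le_iff_ne_zero.mpr (Nat.succ_ne_zero n)
        nlinarith
      linarith
    have := bernstein_grad (by positivity : (0:ℝ) < R/4) hc hgs hgb hgeq i
    rwa [hgdef, Dd_convolution hvtcs hvt1 i x₀] at this
  -- pass to the limit
  have htend : Filter.Tendsto
      (fun n => (((kk n).normed volume ⋆[lsmul ℝ ℝ, volume] Dd i vt) x₀))
      Filter.atTop (𝓝 (Dd i vt x₀)) := by
    apply ContDiffBump.convolution_tendsto_right (φ := kk) (g := fun _ => Dd i vt)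
      (k := fun _ => x₀)
    · have h0 : Filter.Tendsto (fun n : ℕ => R/8 * (1/((n:ℝ)+1))) Filter.atTop (𝓝 0) := by
        have := tendsto_one_div_add_atTop_nhds_zero_nat.const_mul (R/8)
        simpa using this
      have heqf : (fun n : ℕ => (kk n).rOut) = fun n : ℕ => R/8 * (1/((n:ℝ)+1)) := by
        funext n; rw [hrOut]; field_simp
      rw [heqf]; exact h0
    · exact Filter.Eventually.of_forall fun n =>
        ((contDiff_one_Dd hvt2 i).continuous).aestronglyMeasurable
    · exact ((contDiff_one_Dd hvt2 i).continuous.continuousAt).tendsto.comp Filter.tendsto_snd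
    · exact tendsto_const_nhds
  have hlim : (Dd i vt x₀)^2 * (R/4)^2 ≤ 12 :=
    le_of_tendsto ((htend.pow 2).mul_const ((R/4)^2)) (Filter.Eventually.of_forall hbern)
  -- identify Dd i vt x₀ with - Dd i u x₀
  have hDeq : Dd i vt x₀ = - Dd i u x₀ := by
    have h1 : Dd i vt x₀ = Dd i (fun z => 1 - u z) x₀ := by
      unfold Dd
      rw [(Filter.eventuallyEq_of_mem
        (isOpen_ball.mem_nhds (mem_ball_self (by positivity : (0:ℝ) < R/2))) hveq).fderiv_eq]
    rw [h1]
    unfold Dd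
    rw [fderiv_one_sub u]
    simp
  rw [hDeq] at hlim
  simpa using hlim

end layer10

theorem stmt_18 :
    ∃ C : ℝ, 0 < C ∧ ∀ (Ω : Set E2), IsOpen Ω → Bornology.IsBounded Ω →
      ∀ (ε R : ℝ) (x₀ : E2) (u : E2 → ℝ), 0 < ε → ε < 1 → 0 < R →
        Metric.ball x₀ R ⊆ Ω →
        ContDiffOn ℝ 2 u (Metric.ball x₀ R) →
        (∀ x ∈ Metric.ball x₀ R, -lap u x = 1 / (4 * ε ^ 2) * (1 - u x)) →
        (∀ x ∈ Metric.ball x₀ R, 0 ≤ u x ∧ u x ≤ 1) →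
        ‖gradient u x₀‖ ≤ C * (1 / ε + 1 / R) := by
  refine ⟨20, by norm_num, ?_⟩
  intro Ω hΩo hΩb ε R x₀ u hε hε1 hR hsubΩ hu hpde hbd
  have hc : (0:ℝ) ≤ 1 / (4 * ε ^ 2) := by positivity
  have hcomp : ∀ i : Fin 2, (Dd i u x₀)^2 ≤ 192/R^2 := by
    intro i
    have h1 := grad_component_bound hR hc hu hpde hbd i
    have hR2 : (0:ℝ) < R^2 := by positivity
    rw [le_div_iff₀ hR2]
    nlinarith
  -- components of the gradient
  have hgc : ∀ i : Fin 2, gradient u x₀ i = Dd i u x₀ := by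
    intro i
    have h1 : (inner ℝ (gradient u x₀) (ee i) : ℝ) = fderiv ℝ u x₀ (ee i) := by
      unfold gradient
      exact InnerProductSpace.toDual_symm_apply
    have h2 : (inner ℝ (gradient u x₀) (ee i) : ℝ) = gradient u x₀ i := by
      unfold ee
      rw [show ((1:ℝ) : ℝ) = ((1:ℝ) : ℝ) from rfl]
      rw [EuclideanSpace.inner_single_right i (1:ℝ) (gradient u x₀)]
      simp
    rw [← h2, h1]; rfl
  have hnorm : ‖gradient u x₀‖ ≤ 20/R := by
    rw [EuclideanSpace.norm_eq]
    have hsum : ∑ j : Fin 2, ‖gradient u x₀ j‖^2 ≤ 384/R^2 := by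
      rw [Fin.sum_univ_two]
      have h0 := hcomp 0
      have h1 := hcomp 1
      rw [hgc 0, hgc 1, Real.norm_eq_abs, Real.norm_eq_abs, sq_abs, sq_abs]
      rw [show (384:ℝ)/R^2 = 192/R^2 + 192/R^2 by ring]
      exact add_le_add h0 h1
    calc √(∑ j : Fin 2, ‖gradient u x₀ j‖^2) ≤ √(384/R^2) := Real.sqrt_le_sqrt hsum
      _ ≤ √((20/R)^2) := by
          apply Real.sqrt_le_sqrt
          rw [div_pow]
          rw [div_le_div_iff₀ (by positivity) (by positivity)]
          nlinarith
      _ = 20/R := Real.sqrt_sq (by positivity)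
  calc ‖gradient u x₀‖ ≤ 20/R := hnorm
    _ ≤ 20 * (1/ε + 1/R) := by
        have h1 : (0:ℝ) < 1/ε := by positivity
        rw [mul_add]
        have : (20:ℝ)/R = 20 * (1/R) := by ring
        nlinarith
end
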